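/- arXiv:2207.01051 — 4 statements merged into one kernel-verified Lean document; each statement's English description precedes it below -/
import Mathlib

section
/- Every handcuff contains a subdigraph H′ with ρ(H′) ≤ −2. -/
/-!
Basic theory of finite digraphs: a digraph has a finite vertex set and a
finite set of arcs (ordered pairs of distinct vertices).
-/

/-- A finite digraph on a vertex type `V`: a finite vertex set together with a
finite set of arcs, each arc being an ordered pair of distinct vertices. -/
structure Digraph' (V : Type*) where
  verts : Finset V
  arcs : Finset (V × V)
  wf : ∀ a ∈ arcs, a.1 ∈ verts ∧ a.2 ∈ verts ∧ a.1 ≠ a.2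

namespace Digraph'

variable {V : Type*} [DecidableEq V]

/-- The number of vertices of a digraph. -/
def n (D : Digraph' V) : ℕ := D.verts.card

/-- The number of arcs of a digraph. -/
def m (D : Digraph' V) : ℕ := D.arcs.card

/-- The set of consecutive (cyclically) pairs of a list, i.e. the arcs of the
directed cycle running through the list. -/
def cyclicArcs (c : List V) : Finset (V × V) := (c.zip (c.rotate 1)).toFinset

/-- The set of consecutive pairs of a list, i.e. the arcs of the directed path
running through the list. -/
def pathArcs (p : List V) : Finset (V × V) := (p.zip p.tail).toFinset

/-- The symmetric closure of a set of arcs. -/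
def symArcs (s : Finset (V × V)) : Finset (V × V) := s ∪ s.image Prod.swap

/-- The arcs of the bidirected path running through a list (each consecutive
pair is joined by a digon). -/
def pathDigonArcs (p : List V) : Finset (V × V) := symArcs (pathArcs p)

/-- `p` is the list of vertices of a path of odd length (an odd number of edges,
equivalently an even number of vertices) from `a` to `b`. -/
def IsOddBidirPathList (p : List V) (a b : V) : Prop :=
  p.Nodup ∧ Even p.length ∧ p.head? = some a ∧ p.getLast? = some b

/-- The subdigraph induced by `S` contains no directed cycle.  A directed cycle
is given by a nonempty list of at least two distinct vertices, each one having an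
arc towards the (cyclically) next one. -/
def AcyclicOn (D : Digraph' V) (S : Finset V) : Prop :=
  ¬ ∃ c : List V, c.Nodup ∧ 2 ≤ c.length ∧ (∀ v ∈ c, v ∈ S) ∧ cyclicArcs c ⊆ D.arcs

/-- `φ` is a `k`-dicolouring of `D`: every colour class induces an acyclic
subdigraph. -/
def IsDicolouring (D : Digraph' V) (k : ℕ) (φ : V → Fin k) : Prop :=
  ∀ i : Fin k, D.AcyclicOn (D.verts.filter fun v => φ v = i)

/-- `D` admits a `k`-dicolouring. -/
def Dicolourable (D : Digraph' V) (k : ℕ) : Prop :=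
  ∃ φ : V → Fin k, D.IsDicolouring k φ

/-- The dichromatic number of `D`: the least `k` such that `D` is
`k`-dicolourable. -/
noncomputable def dichromatic (D : Digraph' V) : ℕ := sInf {k | D.Dicolourable k}

/-- `H` is a subdigraph of `D`. -/
def IsSubdigraph (H D : Digraph' V) : Prop := H.verts ⊆ D.verts ∧ H.arcs ⊆ D.arcs

/-- `H` is a proper subdigraph of `D`. -/
def IsProperSubdigraph (H D : Digraph' V) : Prop :=
  H.IsSubdigraph D ∧ (H.verts ≠ D.verts ∨ H.arcs ≠ D.arcs)

/-- `D` is `k`-dicritical: its dichromatic number is `k` and every proper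
subdigraph has dichromatic number at most `k - 1`. -/
def Dicritical (k : ℕ) (D : Digraph' V) : Prop :=
  D.dichromatic = k ∧
    ∀ H : Digraph' V, H.IsProperSubdigraph D → H.dichromatic ≤ k - 1

/-- `D` is an oriented graph: it has no digon. -/
def Oriented (D : Digraph' V) : Prop := ∀ a ∈ D.arcs, (a.2, a.1) ∉ D.arcs

/-- There is a digon between `u` and `v` in `D`. -/
def HasDigon (D : Digraph' V) (u v : V) : Prop :=
  (u, v) ∈ D.arcs ∧ (v, u) ∈ D.arcs

/-- `u` and `v` are neighbours: there is at least one arc between them. -/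
def UAdj (D : Digraph' V) (u v : V) : Prop :=
  (u, v) ∈ D.arcs ∨ (v, u) ∈ D.arcs

/-- `M` is a matching of digons of `D` (a matching of the digon graph `B(D)`):
a set of digons of `D`, pairwise sharing no end-vertex. -/
def IsDigonMatching (D : Digraph' V) (M : Finset (V × V)) : Prop :=
  (∀ p ∈ M, D.HasDigon p.1 p.2) ∧
    ∀ p ∈ M, ∀ q ∈ M, p ≠ q → p.1 ≠ q.1 ∧ p.1 ≠ q.2 ∧ p.2 ≠ q.1 ∧ p.2 ≠ q.2

/-- `π(D)`: the maximum size of a matching of the digon graph `B(D)`. -/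
noncomputable def piNum (D : Digraph' V) : ℕ :=
  sSup {k | ∃ M : Finset (V × V), D.IsDigonMatching M ∧ M.card = k}

/-- The potential `ρ(D) = 7 n(D) - 3 m(D) - 2 π(D)`. -/
noncomputable def potential (D : Digraph' V) : ℤ :=
  7 * (D.n : ℤ) - 3 * (D.m : ℤ) - 2 * (D.piNum : ℤ)

/-- The subdigraph of `D` induced by `R`. -/
def induce (D : Digraph' V) (R : Finset V) : Digraph' V where
  verts := D.verts ∩ R
  arcs := D.arcs.filter fun a => a.1 ∈ R ∧ a.2 ∈ R
  wf := by
    intro a ha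
    rw [Finset.mem_filter] at ha
    obtain ⟨h, h1, h2⟩ := ha
    obtain ⟨hv1, hv2, hne⟩ := D.wf a h
    exact ⟨Finset.mem_inter.mpr ⟨hv1, h1⟩, Finset.mem_inter.mpr ⟨hv2, h2⟩, hne⟩

/-- The potential `ρ_D(R)` of a set of vertices `R` in `D`: the potential of the
subdigraph of `D` induced by `R`. -/
noncomputable def potentialOn (D : Digraph' V) (R : Finset V) : ℤ :=
  (D.induce R).potential

/-- The digraph obtained from `D` by deleting the arc `a`. -/
def eraseArc (D : Digraph' V) (a : V × V) : Digraph' V where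
  verts := D.verts
  arcs := D.arcs.erase a
  wf := fun b hb => D.wf b (Finset.mem_of_mem_erase hb)

/-- The digraph obtained from `D` by deleting the vertex `v`. -/
def delVert (D : Digraph' V) (v : V) : Digraph' V where
  verts := D.verts.erase v
  arcs := D.arcs.filter fun a => a.1 ≠ v ∧ a.2 ≠ v
  wf := by
    intro a ha
    rw [Finset.mem_filter] at ha
    obtain ⟨h, h1, h2⟩ := ha
    obtain ⟨hv1, hv2, hne⟩ := D.wf a h
    exact ⟨Finset.mem_erase.mpr ⟨h1, hv1⟩, Finset.mem_erase.mpr ⟨h2, hv2⟩, hne⟩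

/-- The degree of `v` in `D`: the number of arcs incident to `v`. -/
def degree (D : Digraph' V) (v : V) : ℕ :=
  (D.arcs.filter fun a => a.1 = v ∨ a.2 = v).card

/-- `D` is a bidirected odd cycle: obtained from an undirected cycle of odd
length (at least 3) by replacing every edge by a digon. -/
def IsBidirectedOddCycle (D : Digraph' V) : Prop :=
  ∃ c : List V, c.Nodup ∧ 3 ≤ c.length ∧ Odd c.length ∧
    D.verts = c.toFinset ∧ D.arcs = symArcs (cyclicArcs c)

/-- `H` is a bidirected odd cycle with one arc removed. -/
def IsBidirOddCycleMinusArc (H : Digraph' V) : Prop :=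
  ∃ (C : Digraph' V) (e : V × V), C.IsBidirectedOddCycle ∧ e ∈ C.arcs ∧
    H.verts = C.verts ∧ H.arcs = C.arcs.erase e

/-- `D` is an odd 3-wheel with center `c`: a vertex `c` joined to a directed
3-cycle `(x, y, z, x)` by three bidirected paths of odd length, pairwise
disjoint except in `c`. -/
def IsOdd3WheelWithCenter (D : Digraph' V) (c : V) : Prop :=
  ∃ (p₁ p₂ p₃ : List V) (x y z : V),
    IsOddBidirPathList p₁ c x ∧ IsOddBidirPathList p₂ c y ∧ IsOddBidirPathList p₃ c z ∧
    p₁.toFinset ∩ p₂.toFinset = {c} ∧ p₁.toFinset ∩ p₃.toFinset = {c} ∧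
    p₂.toFinset ∩ p₃.toFinset = {c} ∧
    D.verts = p₁.toFinset ∪ p₂.toFinset ∪ p₃.toFinset ∧
    D.arcs = pathDigonArcs p₁ ∪ pathDigonArcs p₂ ∪ pathDigonArcs p₃ ∪
      {(x, y), (y, z), (z, x)}

/-- `D` is an odd 3-wheel. -/
def IsOdd3Wheel (D : Digraph' V) : Prop := ∃ c : V, D.IsOdd3WheelWithCenter c

end Digraph'

open Digraph' in
/-- `D` is a handcuff: obtained from the digraph on `{x, x', y, z, z'}` with
arcs `xy, x'y, yz, yz', z'x', zx', z'x` by adding two bidirected paths of odd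
length, `P₁` linking `z` and `z'` and `P₂` linking `x` and `x'`, whose internal
vertices may intersect each other but avoid `{x, x', y, z, z'}`. -/
def Digraph'.IsHandcuff {V : Type*} [DecidableEq V] (D : Digraph' V) : Prop :=
  ∃ (x x' y z z' : V) (p₁ p₂ : List V),
    IsOddBidirPathList p₁ z z' ∧ IsOddBidirPathList p₂ x x' ∧
    ([x, x', y, z, z'] : List V).Nodup ∧
    p₁.toFinset ∩ {x, x', y, z, z'} = {z, z'} ∧
    p₂.toFinset ∩ {x, x', y, z, z'} = {x, x'} ∧
    D.verts = {x, x', y, z, z'} ∪ p₁.toFinset ∪ p₂.toFinset ∧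
    D.arcs = pathDigonArcs p₁ ∪ pathDigonArcs p₂ ∪
      {(x, y), (x', y), (y, z), (y, z'), (z', x'), (z, x'), (z', x)}


set_option linter.unusedSectionVars false

namespace HandcuffAux

variable {V : Type*} [DecidableEq V]

/-- list of adjacent pairs -/
def adjList (l : List V) : List (V × V) := l.zip l.tail

@[simp] lemma adjList_nil : adjList ([] : List V) = [] := rfl
@[simp] lemma adjList_single (x : V) : adjList [x] = [] := rfl
@[simp] lemma adjList_cons_cons (x y : V) (r : List V) :
    adjList (x :: y :: r) = (x, y) :: adjList (y :: r) := rfl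

lemma mem_fst_of_mem_adjList : ∀ (l : List V) (pr : V × V), pr ∈ adjList l → pr.1 ∈ l
  | [], _, h => by simp at h
  | [x], _, h => by simp at h
  | x :: y :: r, pr, h => by
      rw [adjList_cons_cons] at h
      rcases List.mem_cons.mp h with h | h
      · simp [h]
      · exact List.mem_cons_of_mem _ (mem_fst_of_mem_adjList (y :: r) pr h)

lemma mem_snd_of_mem_adjList {l : List V} {pr : V × V} (h : pr ∈ adjList l) : pr.2 ∈ l.tail := by
  have hlen : l.tail.length ≤ l.length := by simp [List.length_tail]
  have h2 : pr.2 ∈ List.map Prod.snd (l.zip l.tail) := List.mem_map_of_mem (f := Prod.snd) h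
  rwa [List.map_snd_zip hlen] at h2

lemma mem_snd_of_mem_adjList' {l : List V} {pr : V × V} (h : pr ∈ adjList l) : pr.2 ∈ l :=
  List.mem_of_mem_tail (mem_snd_of_mem_adjList h)

lemma adjList_sublist (x : V) (l : List V) : (adjList l).Sublist (adjList (x :: l)) := by
  cases l with
  | nil => simp
  | cons y r => rw [adjList_cons_cons]; exact List.sublist_cons_self _ _

lemma adjList_nodup {l : List V} (h : l.Nodup) : (adjList l).Nodup := by
  have hlen : l.tail.length ≤ l.length := by simp [List.length_tail]
  have hmap : List.map Prod.snd (adjList l) = l.tail := List.map_snd_zip hlen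
  have h2 : (List.map Prod.snd (adjList l)).Nodup := by rw [hmap]; exact h.tail
  exact h2.of_map

lemma adjList_length {l : List V} : (adjList l).length = l.length - 1 := by
  simp [adjList, List.length_zip, List.length_tail]

lemma not_rev_mem_adjList : ∀ (l : List V), l.Nodup → ∀ u v : V,
    (u, v) ∈ adjList l → (v, u) ∈ adjList l → False
  | [], _, u, v, h1, _ => by simp at h1
  | [x], _, u, v, h1, _ => by simp at h1
  | x :: y :: r, h, u, v, h1, h2 => by
      rw [adjList_cons_cons] at h1 h2
      rcases List.mem_cons.mp h1 with h1' | h1' <;> rcases List.mem_cons.mp h2 with h2' | h2' <;> clear h1 h2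
      · rw [Prod.mk.injEq] at h1' h2'
        obtain ⟨rfl, rfl⟩ := h1'
        obtain ⟨rfl, -⟩ := h2'
        simp [List.nodup_cons] at h
      · rw [Prod.mk.injEq] at h1'
        obtain ⟨rfl, rfl⟩ := h1'
        have hx : ((v, u)).2 ∈ v :: r := mem_snd_of_mem_adjList' h2'
        simp only [List.nodup_cons, List.mem_cons] at h hx
        tauto
      · rw [Prod.mk.injEq] at h2'
        obtain ⟨rfl, rfl⟩ := h2'
        have hx : ((u, v)).2 ∈ u :: r := mem_snd_of_mem_adjList' h1'
        simp only [List.nodup_cons, List.mem_cons] at h hx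
        tauto
      · exact not_rev_mem_adjList (y :: r) (List.nodup_cons.mp h).2 u v h1' h2'

end HandcuffAux

open Digraph'

namespace HandcuffAux

variable {V : Type*} [DecidableEq V]

lemma pathArcs_eq (l : List V) : pathArcs l = (adjList l).toFinset := rfl

lemma mem_symArcs {s : Finset (V × V)} {e : V × V} :
    e ∈ symArcs s ↔ e ∈ s ∨ e.swap ∈ s := by
  simp only [symArcs, Finset.mem_union, Finset.mem_image]
  constructor
  · rintro (h | ⟨a, ha, rfl⟩)
    · exact Or.inl h
    · exact Or.inr (by simpa using ha)
  · rintro (h | h)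
    · exact Or.inl h
    · exact Or.inr ⟨e.swap, h, by simp⟩

lemma card_symArcs_le (s : Finset (V × V)) : (symArcs s).card ≤ 2 * s.card := by
  refine (Finset.card_union_le _ _).trans ?_
  have := Finset.card_image_le (s := s) (f := Prod.swap)
  omega

lemma card_symArcs_eq {s : Finset (V × V)} (h : ∀ e ∈ s, e.swap ∉ s) :
    (symArcs s).card = 2 * s.card := by
  have hdisj : Disjoint s (s.image Prod.swap) := by
    rw [Finset.disjoint_left]
    rintro e he hmem
    obtain ⟨a, ha, rfl⟩ := Finset.mem_image.mp hmem
    exact h a ha (by simpa using he)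
  rw [symArcs, Finset.card_union_of_disjoint hdisj,
    Finset.card_image_of_injective _ Prod.swap_injective]
  omega

lemma card_pathDigonArcs {l : List V} (h : l.Nodup) :
    (pathDigonArcs l).card = 2 * (l.length - 1) := by
  rw [pathDigonArcs, card_symArcs_eq, pathArcs_eq,
    List.toFinset_card_of_nodup (adjList_nodup h), adjList_length]
  intro e he hsw
  rw [pathArcs_eq, List.mem_toFinset] at he hsw
  exact not_rev_mem_adjList l h e.1 e.2 he hsw

lemma mem_pathDigonArcs_endpoints {l : List V} {e : V × V} (h : e ∈ pathDigonArcs l) :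
    e.1 ∈ l ∧ e.2 ∈ l := by
  rw [pathDigonArcs, mem_symArcs] at h
  rcases h with h | h <;> rw [pathArcs_eq, List.mem_toFinset] at h
  · exact ⟨mem_fst_of_mem_adjList _ _ h, mem_snd_of_mem_adjList' h⟩
  · exact ⟨mem_snd_of_mem_adjList' h, mem_fst_of_mem_adjList _ _ h⟩

lemma digon_of_mem_adjList {l : List V} {u v : V} (h : (u, v) ∈ adjList l) :
    (u, v) ∈ pathDigonArcs l ∧ (v, u) ∈ pathDigonArcs l := by
  constructor
  · rw [pathDigonArcs, mem_symArcs]; left; rw [pathArcs_eq, List.mem_toFinset]; exact h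
  · rw [pathDigonArcs, mem_symArcs]; right; rw [pathArcs_eq, List.mem_toFinset]; simpa using h

/-! ### chunk pairs and greedy off-matching -/

def chunkPairs : List V → List (V × V)
  | x :: y :: r => (x, y) :: chunkPairs r
  | _ => []

def offMatch (S : Finset V) : List V → List (V × V)
  | x :: y :: r =>
    if x ∈ S then offMatch S (y :: r)
    else if y ∈ S then offMatch S r
    else (x, y) :: offMatch S r
  | _ => []

def supp (L : List (V × V)) : List V := L.flatMap fun pr => [pr.1, pr.2]

@[simp] lemma supp_nil : supp ([] : List (V × V)) = [] := rfl
@[simp] lemma supp_cons (pr : V × V) (L : List (V × V)) :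
    supp (pr :: L) = pr.1 :: pr.2 :: supp L := rfl

lemma supp_append (L M : List (V × V)) : supp (L ++ M) = supp L ++ supp M :=
  List.flatMap_append ..

lemma mem_supp_of_mem {L : List (V × V)} {pr : V × V} (h : pr ∈ L) :
    pr.1 ∈ supp L ∧ pr.2 ∈ supp L := by
  induction L with
  | nil => simp at h
  | cons q rest ih =>
    rcases List.mem_cons.mp h with rfl | h
    · simp
    · have := ih h
      simp only [supp_cons, List.mem_cons]
      tauto

lemma map_fst_sublist_supp (L : List (V × V)) : (L.map Prod.fst).Sublist (supp L) := by
  induction L with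
  | nil => simp
  | cons q rest ih =>
    simp only [List.map_cons, supp_cons]
    exact (ih.cons _).cons₂ _

lemma nodup_of_supp_nodup {L : List (V × V)} (h : (supp L).Nodup) : L.Nodup := by
  have h1 : (L.map Prod.fst).Nodup := h.sublist (map_fst_sublist_supp L)
  exact h1.of_map

lemma endpoints_distinct {L : List (V × V)} (h : (supp L).Nodup) :
    ∀ p ∈ L, ∀ q ∈ L, p ≠ q → p.1 ≠ q.1 ∧ p.1 ≠ q.2 ∧ p.2 ≠ q.1 ∧ p.2 ≠ q.2 := by
  induction L with
  | nil => simp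
  | cons pr rest ih =>
    simp only [supp_cons, List.nodup_cons] at h
    obtain ⟨h1, h2, h3⟩ := h
    intro p hp q hq hne
    have key : ∀ q' ∈ rest, pr.1 ≠ q'.1 ∧ pr.1 ≠ q'.2 ∧ pr.2 ≠ q'.1 ∧ pr.2 ≠ q'.2 := by
      intro q' hq'
      obtain ⟨hq1, hq2⟩ := mem_supp_of_mem hq'
      have hp1 : pr.1 ∉ supp rest := fun hc => h1 (List.mem_cons_of_mem _ hc)
      exact ⟨fun e => hp1 (e ▸ hq1), fun e => hp1 (e ▸ hq2),
             fun e => h2 (e ▸ hq1), fun e => h2 (e ▸ hq2)⟩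
    rcases List.mem_cons.mp hp with rfl | hp' <;> rcases List.mem_cons.mp hq with rfl | hq' <;>
      clear hp hq
    · exact absurd rfl hne
    · exact key q hq'
    · have := key p hp'
      tauto
    · exact ih h3 p hp' q hq' hne

end HandcuffAux

namespace HandcuffAux

variable {V : Type*} [DecidableEq V]

lemma offMatch_cons_mem {S : Finset V} {x y : V} {r : List V} (hx : x ∈ S) :
    offMatch S (x :: y :: r) = offMatch S (y :: r) := by simp [offMatch, hx]

lemma offMatch_cons_snd {S : Finset V} {x y : V} {r : List V} (hx : x ∉ S) (hy : y ∈ S) :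
    offMatch S (x :: y :: r) = offMatch S r := by simp [offMatch, hx, hy]

lemma offMatch_cons_none {S : Finset V} {x y : V} {r : List V} (hx : x ∉ S) (hy : y ∉ S) :
    offMatch S (x :: y :: r) = (x, y) :: offMatch S r := by simp [offMatch, hx, hy]

lemma chunkPairs_subset : ∀ (l : List V), ∀ pr ∈ chunkPairs l, pr ∈ adjList l
  | [], pr, h => by simp [chunkPairs] at h
  | [x], pr, h => by simp [chunkPairs] at h
  | x :: y :: r, pr, h => by
    rw [show chunkPairs (x :: y :: r) = (x, y) :: chunkPairs r from rfl] at h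
    rcases List.mem_cons.mp h with rfl | h
    · simp
    · have h1 := chunkPairs_subset r pr h
      exact ((adjList_sublist y r).trans (adjList_sublist x (y :: r))).mem h1

lemma offMatch_subset (S : Finset V) : ∀ (l : List V), ∀ pr ∈ offMatch S l,
    pr ∈ adjList l ∧ pr.1 ∉ S ∧ pr.2 ∉ S
  | [], pr, h => by simp [offMatch] at h
  | [x], pr, h => by simp [offMatch] at h
  | x :: y :: r, pr, h => by
    by_cases hx : x ∈ S
    · rw [offMatch_cons_mem hx] at h
      have h1 := offMatch_subset S (y :: r) pr h
      exact ⟨(adjList_sublist x (y :: r)).mem h1.1, h1.2⟩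
    · by_cases hy : y ∈ S
      · rw [offMatch_cons_snd hx hy] at h
        have h1 := offMatch_subset S r pr h
        exact ⟨((adjList_sublist y r).trans (adjList_sublist x (y :: r))).mem h1.1, h1.2⟩
      · rw [offMatch_cons_none hx hy] at h
        rcases List.mem_cons.mp h with rfl | h
        · exact ⟨by simp, hx, hy⟩
        · have h1 := offMatch_subset S r pr h
          exact ⟨((adjList_sublist y r).trans (adjList_sublist x (y :: r))).mem h1.1, h1.2⟩

lemma supp_chunkPairs_sublist : ∀ l : List V, (supp (chunkPairs l)).Sublist l
  | [] => by simp [chunkPairs]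
  | [x] => by simp [chunkPairs]
  | x :: y :: r => by
    rw [show chunkPairs (x :: y :: r) = (x, y) :: chunkPairs r from rfl, supp_cons]
    exact ((supp_chunkPairs_sublist r).cons₂ y).cons₂ x

lemma supp_offMatch_sublist (S : Finset V) : ∀ l : List V, (supp (offMatch S l)).Sublist l
  | [] => by simp [offMatch]
  | [x] => by simp [offMatch]
  | x :: y :: r => by
    by_cases hx : x ∈ S
    · rw [offMatch_cons_mem hx]
      exact (supp_offMatch_sublist S (y :: r)).cons _
    · by_cases hy : y ∈ S
      · rw [offMatch_cons_snd hx hy]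
        exact ((supp_offMatch_sublist S r).cons _).cons _
      · rw [offMatch_cons_none hx hy, supp_cons]
        exact ((supp_offMatch_sublist S r).cons₂ y).cons₂ x

/-! ### counting -/

def tS (S : Finset V) (l : List V) : ℕ := l.countP fun v => decide (v ∈ S)

def cS (S : Finset V) (l : List V) : ℕ :=
  (adjList l).countP fun pr => decide (pr.1 ∈ S ∧ pr.2 ∈ S)

def hS (S : Finset V) : List V → ℕ
  | [] => 0
  | x :: _ => if x ∈ S then 1 else 0

@[simp] lemma tS_nil (S : Finset V) : tS S ([] : List V) = 0 := rfl
@[simp] lemma cS_nil (S : Finset V) : cS S ([] : List V) = 0 := rfl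
@[simp] lemma cS_single (S : Finset V) (x : V) : cS S [x] = 0 := rfl
@[simp] lemma hS_nil (S : Finset V) : hS S ([] : List V) = 0 := rfl
@[simp] lemma hS_cons (S : Finset V) (x : V) (l : List V) :
    hS S (x :: l) = if x ∈ S then 1 else 0 := rfl

lemma tS_cons (S : Finset V) (x : V) (l : List V) :
    tS S (x :: l) = (if x ∈ S then 1 else 0) + tS S l := by
  simp [tS, List.countP_cons]
  by_cases hx : x ∈ S <;> simp [hx] <;> omega

lemma cS_cons (S : Finset V) (x : V) (l : List V) :
    cS S (x :: l) = (if x ∈ S then hS S l else 0) + cS S l := by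
  cases l with
  | nil => simp
  | cons y r =>
    simp only [cS, adjList_cons_cons, List.countP_cons, hS_cons]
    by_cases hx : x ∈ S <;> by_cases hy : y ∈ S <;> simp [hx, hy] <;> omega

lemma hS_le (S : Finset V) (l : List V) : hS S l ≤ min 1 (tS S l) := by
  cases l with
  | nil => simp
  | cons y r =>
    by_cases hy : y ∈ S <;> simp [hy, tS_cons]

lemma cS_le_tS (S : Finset V) : ∀ l : List V, cS S l + min 1 (tS S l) ≤ tS S l
  | [] => by simp
  | x :: l => by
    have ih := cS_le_tS S l
    have hhS := hS_le S l
    rw [cS_cons, tS_cons]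
    by_cases hx : x ∈ S <;> simp [hx] <;> omega

lemma offMatch_count (S : Finset V) : ∀ l : List V,
    l.length + cS S l + hS S l ≤ 2 * (offMatch S l).length + 2 * tS S l + 1
  | [] => by simp [offMatch]
  | [x] => by by_cases hx : x ∈ S <;> simp [offMatch, hx, tS_cons]
  | x :: y :: r => by
    have ih1 := offMatch_count S (y :: r)
    have ih2 := offMatch_count S r
    rw [cS_cons, cS_cons, tS_cons, tS_cons] at *
    by_cases hx : x ∈ S
    · rw [offMatch_cons_mem hx]
      simp only [hx, if_pos, List.length_cons, hS_cons] at *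
      by_cases hy : y ∈ S <;> simp [hy] at * <;> omega
    · by_cases hy : y ∈ S
      · rw [offMatch_cons_snd hx hy]
        simp only [hx, hy, if_pos, if_neg, List.length_cons, hS_cons, if_false] at *
        simp at *
        omega
      · rw [offMatch_cons_none hx hy]
        simp only [List.length_cons, hS_cons] at *
        simp [hx, hy] at *
        omega

end HandcuffAux

namespace HandcuffAux
variable {V : Type*} [DecidableEq V]
lemma chunkPairs_length : ∀ l : List V,
    l.length ≤ 2 * (chunkPairs l).length + 1 ∧ 2 * (chunkPairs l).length ≤ l.length
  | [] => by simp [chunkPairs]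
  | [x] => by simp [chunkPairs]
  | x :: y :: r => by
    have := chunkPairs_length r
    rw [show chunkPairs (x :: y :: r) = (x, y) :: chunkPairs r from rfl]
    simp only [List.length_cons]
    omega
end HandcuffAux

namespace HandcuffAux

open Digraph'

variable {V : Type*} [DecidableEq V]

lemma mem_supp_iff {L : List (V × V)} {v : V} :
    v ∈ supp L ↔ ∃ pr ∈ L, v = pr.1 ∨ v = pr.2 := by
  simp [supp, List.mem_flatMap]

lemma piNum_ge (D : Digraph' V) {M : Finset (V × V)} (hM : D.IsDigonMatching M) :
    M.card ≤ D.piNum := by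
  have hb : ∀ k ∈ {k | ∃ M' : Finset (V × V), D.IsDigonMatching M' ∧ M'.card = k},
      k ≤ D.verts.card := by
    rintro k ⟨M', hM', rfl⟩
    apply Finset.card_le_card_of_injOn Prod.fst
    · intro p hp
      exact (D.wf (p.1, p.2) (hM'.1 p hp).1).1
    · intro p hp q hq hfst
      by_contra hne
      exact (hM'.2 p hp q hq hne).1 hfst
  exact le_csSup ⟨D.verts.card, fun k hk => hb k hk⟩ ⟨M, hM, rfl⟩

lemma build_matching (D : Digraph' V) (p₁ p₂ : List V) (h1 : p₁.Nodup) (h2 : p₂.Nodup)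
    (ha1 : pathDigonArcs p₁ ⊆ D.arcs) (ha2 : pathDigonArcs p₂ ⊆ D.arcs) :
    ∃ M : Finset (V × V), D.IsDigonMatching M ∧
      M.card = (chunkPairs p₁).length + (offMatch p₁.toFinset p₂).length := by
  set S := p₁.toFinset with hS
  set L := chunkPairs p₁ ++ offMatch S p₂ with hL
  have hsupp : (supp L).Nodup := by
    rw [hL, supp_append]
    apply List.Nodup.append
    · exact h1.sublist (supp_chunkPairs_sublist p₁)
    · exact h2.sublist (supp_offMatch_sublist S p₂)
    · intro v hv1 hv2
      obtain ⟨pr, hpr, hor⟩ := mem_supp_iff.mp hv2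
      have hnot := offMatch_subset S p₂ pr hpr
      have hvS : v ∈ S := by
        rw [hS, List.mem_toFinset]
        exact (supp_chunkPairs_sublist p₁).mem hv1
      rcases hor with rfl | rfl
      · exact hnot.2.1 hvS
      · exact hnot.2.2 hvS
  have hmemL : ∀ pr ∈ L, D.HasDigon pr.1 pr.2 := by
    intro pr hpr
    rcases List.mem_append.mp hpr with hpr | hpr
    · have hadj := chunkPairs_subset p₁ pr hpr
      have := digon_of_mem_adjList (l := p₁) (u := pr.1) (v := pr.2) (by simpa using hadj)
      exact ⟨ha1 this.1, ha1 this.2⟩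
    · have hadj := (offMatch_subset S p₂ pr hpr).1
      have := digon_of_mem_adjList (l := p₂) (u := pr.1) (v := pr.2) (by simpa using hadj)
      exact ⟨ha2 this.1, ha2 this.2⟩
  refine ⟨L.toFinset, ⟨?_, ?_⟩, ?_⟩
  · intro pr hpr
    exact hmemL pr (List.mem_toFinset.mp hpr)
  · intro p hp q hq hne
    exact endpoints_distinct hsupp p (List.mem_toFinset.mp hp) q (List.mem_toFinset.mp hq) hne
  · rw [List.toFinset_card_of_nodup (nodup_of_supp_nodup hsupp), hL, List.length_append]

end HandcuffAux

open HandcuffAux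

set_option maxHeartbeats 2000000 in
open Digraph' in
/-- Every handcuff has a subdigraph with potential at most
`-2`. -/
theorem handcuff_subdigraph_potential {V : Type*} [DecidableEq V]
    (D : Digraph' V) (h : D.IsHandcuff) :
    ∃ H : Digraph' V, H.IsSubdigraph D ∧ H.potential ≤ -2 := by
  obtain ⟨x, x', y, z, z', p₁, p₂, hP1, hP2, hnd5, hcap1, hcap2, hverts, harcs⟩ := h
  refine ⟨D, ⟨subset_rfl, subset_rfl⟩, ?_⟩
  obtain ⟨hn1, he1, hh1, hl1⟩ := hP1
  obtain ⟨hn2, he2, hh2, hl2⟩ := hP2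
  -- distinctness of the five special vertices
  simp only [List.nodup_cons, List.mem_cons, List.mem_singleton, List.not_mem_nil, or_false,
    not_or, List.nodup_nil, and_true] at hnd5
  obtain ⟨⟨hxx', hxy, hxz, hxz'⟩, ⟨hx'y, hx'z, hx'z'⟩, ⟨hyz, hyz'⟩, hzz'⟩ := hnd5
  -- membership facts
  have hz1 : z ∈ p₁ := List.mem_of_mem_head? (by simp [hh1])
  have hz'1 : z' ∈ p₁ := List.mem_of_mem_getLast? (by simp [hl1])
  have hx2 : x ∈ p₂ := List.mem_of_mem_head? (by simp [hh2])
  have hx'2 : x' ∈ p₂ := List.mem_of_mem_getLast? (by simp [hl2])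
  have hxnp1 : x ∉ p₁ := by
    intro hc
    have hmem : x ∈ p₁.toFinset ∩ ({x, x', y, z, z'} : Finset V) := by simp [hc]
    rw [hcap1] at hmem
    simp at hmem
    exact hmem.elim hxz hxz'
  have hx'np1 : x' ∉ p₁ := by
    intro hc
    have hmem : x' ∈ p₁.toFinset ∩ ({x, x', y, z, z'} : Finset V) := by simp [hc]
    rw [hcap1] at hmem
    simp at hmem
    exact hmem.elim hx'z hx'z'
  have hynp1 : y ∉ p₁ := by
    intro hc
    have hmem : y ∈ p₁.toFinset ∩ ({x, x', y, z, z'} : Finset V) := by simp [hc]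
    rw [hcap1] at hmem
    simp at hmem
    exact hmem.elim hyz hyz'
  have hznp2 : z ∉ p₂ := by
    intro hc
    have hmem : z ∈ p₂.toFinset ∩ ({x, x', y, z, z'} : Finset V) := by simp [hc]
    rw [hcap2] at hmem
    simp at hmem
    exact hmem.elim (fun e => hxz e.symm) (fun e => hx'z e.symm)
  have hz'np2 : z' ∉ p₂ := by
    intro hc
    have hmem : z' ∈ p₂.toFinset ∩ ({x, x', y, z, z'} : Finset V) := by simp [hc]
    rw [hcap2] at hmem
    simp at hmem
    exact hmem.elim (fun e => hxz' e.symm) (fun e => hx'z' e.symm)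
  have hynp2 : y ∉ p₂ := by
    intro hc
    have hmem : y ∈ p₂.toFinset ∩ ({x, x', y, z, z'} : Finset V) := by simp [hc]
    rw [hcap2] at hmem
    simp at hmem
    exact hmem.elim (fun e => hxy e.symm) (fun e => hx'y e.symm)
  -- abbreviations
  set S : Finset V := p₁.toFinset with hSdef
  set P₂ : Finset V := p₂.toFinset with hP₂def
  set A₁ : Finset (V × V) := pathDigonArcs p₁ with hA₁def
  set A₂ : Finset (V × V) := pathDigonArcs p₂ with hA₂def
  set F : Finset (V × V) :=
    {(x, y), (x', y), (y, z), (y, z'), (z', x'), (z, x'), (z', x)} with hFdef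
  set L₁ : ℕ := p₁.length with hL₁def
  set L₂ : ℕ := p₂.length with hL₂def
  set t : ℕ := (S ∩ P₂).card with htdef
  set c : ℕ := cS S p₂ with hcdef
  set Moff : ℕ := (offMatch S p₂).length with hMoffdef
  set sI : ℕ := (A₁ ∩ A₂).card with hsdef
  have hL₁2 : 2 ≤ L₁ := by
    have h1 : 0 < L₁ := List.length_pos_iff.mpr (List.ne_nil_of_mem hz1)
    have h2 : L₁ % 2 = 0 := Nat.even_iff.mp he1
    omega
  have hL₂2 : 2 ≤ L₂ := by
    have h1 : 0 < L₂ := List.length_pos_iff.mpr (List.ne_nil_of_mem hx2)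
    have h2 : L₂ % 2 = 0 := Nat.even_iff.mp he2
    omega
  have hL₁even : L₁ % 2 = 0 := Nat.even_iff.mp he1
  have hL₂even : L₂ % 2 = 0 := Nat.even_iff.mp he2
  -- (1) vertex count
  have f1 : D.n + t ≤ L₁ + L₂ + 1 := by
    have hsub : D.verts ⊆ insert y (S ∪ P₂) := by
      intro v hv
      rw [hverts] at hv
      simp only [Finset.mem_union, Finset.mem_insert, Finset.mem_singleton] at hv
      rcases hv with ((rfl | rfl | rfl | rfl | rfl) | hv) | hv
      · simp [hSdef, hP₂def, hx2]
      · simp [hSdef, hP₂def, hx'2]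
      · simp
      · simp [hSdef, hP₂def, hz1]
      · simp [hSdef, hP₂def, hz'1]
      · simp [Finset.mem_insert, Finset.mem_union]; tauto
      · simp [Finset.mem_insert, Finset.mem_union]; tauto
    have h1 : D.n ≤ (insert y (S ∪ P₂)).card := Finset.card_le_card hsub
    have h2 : (insert y (S ∪ P₂)).card ≤ (S ∪ P₂).card + 1 := by
      have := Finset.card_insert_le y (S ∪ P₂); omega
    have h3 : (S ∪ P₂).card + t = L₁ + L₂ := by
      rw [htdef, Finset.card_union_add_card_inter, hSdef, hP₂def,
        List.toFinset_card_of_nodup hn1, List.toFinset_card_of_nodup hn2]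
    omega
  -- (2) arc count
  have hF7 : F.card = 7 := by
    rw [hFdef]
    rw [Finset.card_insert_of_notMem (by simp [Prod.ext_iff]; tauto)]
    rw [Finset.card_insert_of_notMem (by simp [Prod.ext_iff]; tauto)]
    rw [Finset.card_insert_of_notMem (by simp [Prod.ext_iff]; tauto)]
    rw [Finset.card_insert_of_notMem (by simp [Prod.ext_iff]; tauto)]
    rw [Finset.card_insert_of_notMem (by simp [Prod.ext_iff]; tauto)]
    rw [Finset.card_insert_of_notMem (by simp [Prod.ext_iff]; tauto)]
    simp
  have hdisjF : Disjoint (A₁ ∪ A₂) F := by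
    rw [Finset.disjoint_right]
    intro e hef he
    rw [hFdef] at hef
    simp only [Finset.mem_insert, Finset.mem_singleton] at hef
    rcases hef with rfl | rfl | rfl | rfl | rfl | rfl | rfl <;>
      rcases Finset.mem_union.mp he with h | h <;>
      have hend := mem_pathDigonArcs_endpoints h <;> simp at hend <;> tauto
  have f2 : D.m + sI = 2 * (L₁ - 1) + 2 * (L₂ - 1) + 7 := by
    have hm : D.m = (A₁ ∪ A₂).card + 7 := by
      rw [Digraph'.m, harcs, Finset.card_union_of_disjoint hdisjF, hF7]
    have hcap : (A₁ ∪ A₂).card + sI = A₁.card + A₂.card := by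
      rw [hsdef, Finset.card_union_add_card_inter]
    have hc1 : A₁.card = 2 * (L₁ - 1) := card_pathDigonArcs hn1
    have hc2 : A₂.card = 2 * (L₂ - 1) := card_pathDigonArcs hn2
    omega
  -- (3) shared arcs bound
  have f3 : sI ≤ 2 * c := by
    set SAl : List (V × V) :=
      (adjList p₂).filter (fun pr => decide (pr.1 ∈ S ∧ pr.2 ∈ S)) with hSAldef
    have hsub : A₁ ∩ A₂ ⊆ symArcs SAl.toFinset := by
      intro e he
      have he1' := Finset.mem_inter.mp he
      have hend := mem_pathDigonArcs_endpoints (hA₁def ▸ he1'.1)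
      have he2' : e ∈ A₂ := he1'.2
      rw [hA₂def, pathDigonArcs, mem_symArcs] at he2'
      rw [mem_symArcs]
      rcases he2' with h | h <;> rw [pathArcs_eq, List.mem_toFinset] at h
      · left
        rw [List.mem_toFinset, hSAldef, List.mem_filter]
        refine ⟨h, by simp [hSdef, hend.1, hend.2]⟩
      · right
        rw [List.mem_toFinset, hSAldef, List.mem_filter]
        refine ⟨h, by simp [hSdef, hend.1, hend.2]⟩
    have h1 : sI ≤ (symArcs SAl.toFinset).card := Finset.card_le_card hsub
    have h2 : (symArcs SAl.toFinset).card ≤ 2 * SAl.toFinset.card := card_symArcs_le _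
    have h3 : SAl.toFinset.card ≤ SAl.length := SAl.toFinset_card_le
    have h4 : SAl.length = c := by
      rw [hcdef, cS, List.countP_eq_length_filter]
    omega
  -- t as a list count
  have ht : tS S p₂ = t := by
    rw [tS, List.countP_eq_length_filter, htdef]
    have hnd : (p₂.filter (fun v => decide (v ∈ S))).Nodup := hn2.filter _
    rw [← List.toFinset_card_of_nodup hnd, List.toFinset_filter]
    simp only [decide_eq_true_eq]
    rw [Finset.filter_mem_eq_inter, Finset.inter_comm]
  -- (4) adjacent-shared pairs bound
  have f4 : c + min 1 t ≤ t := by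
    have := cS_le_tS S p₂
    rw [ht] at this
    exact this
  -- (5) greedy matching count
  have f5 : L₂ + c ≤ 2 * Moff + 2 * t + 1 := by
    have := offMatch_count S p₂
    rw [ht] at this
    omega
  -- (6) matching gives piNum bound
  have f6 : L₁ + 2 * Moff ≤ 2 * D.piNum := by
    have hA1sub : pathDigonArcs p₁ ⊆ D.arcs := by
      rw [harcs]
      intro e he
      exact Finset.mem_union_left _ (Finset.mem_union_left _ he)
    have hA2sub : pathDigonArcs p₂ ⊆ D.arcs := by
      rw [harcs]
      intro e he
      exact Finset.mem_union_left _ (Finset.mem_union_right _ he)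
    obtain ⟨M, hM, hcard⟩ := build_matching D p₁ p₂ hn1 hn2 hA1sub hA2sub
    rw [← hSdef] at hcard
    have hpi := piNum_ge D hM
    have hchunk1 := chunkPairs_length p₁
    omega
  -- final arithmetic
  clear_value S P₂ A₁ A₂ F L₁ L₂ t c Moff sI
  clear ht hcap1 hcap2 hverts harcs
  rw [Digraph'.potential]
  omega
end

section
/- Let D be a digraph containing a 3-thread [w, x, y, z], and let D′ = (D − {x, y}) ∪ [w, z] be the digraph obtained by contracting this 3-thread. Then (i) ρ(D′) ≥ ρ(D), and (ii) if D has no 2-dicolouring, then D′ has no 2-dicolouring. -/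
namespace Digraph'

variable {V : Type*} [DecidableEq V]

theorem mem_cyclicArcs_fst {c : List V} {v : V} (hv : v ∈ c) :
    ∃ s ∈ c, (v, s) ∈ cyclicArcs c := by
  have hlen : c.length ≤ (c.rotate 1).length := (List.length_rotate c 1).ge
  have : v ∈ (c.zip (c.rotate 1)).map Prod.fst := by
    rw [List.map_fst_zip hlen]; exact hv
  obtain ⟨p, hp, hpv⟩ := List.mem_map.mp this
  have h2 := (List.of_mem_zip hp).2
  exact ⟨p.2, List.mem_rotate.mp h2, by simpa [cyclicArcs, ← hpv] using hp⟩

theorem mem_of_mem_cyclicArcs {c : List V} {a : V × V} (ha : a ∈ cyclicArcs c) :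
    a.1 ∈ c ∧ a.2 ∈ c := by
  rw [cyclicArcs, List.mem_toFinset] at ha
  obtain ⟨h1, h2⟩ := List.of_mem_zip ha
  exact ⟨h1, List.mem_rotate.mp h2⟩

theorem cyclicArcs_pair (u v : V) : cyclicArcs [u, v] = {(u, v), (v, u)} := by
  simp [cyclicArcs, List.rotate]

end Digraph'

open Digraph' in
/-- Let `D` contain a 3-thread `[w, x, y, z]` (a bidirected
path whose internal vertices `x` and `y` have degree 4 in `D`), and let `D'` be
obtained from `D` by contracting this 3-thread, i.e. deleting `x, y` and adding
the digon `[w, z]`. Then `ρ(D') ≥ ρ(D)`, and if `D` has no 2-dicolouring then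
neither has `D'`. -/
theorem contract_three_thread {V : Type*} [DecidableEq V]
    (D D' : Digraph' V) (w x y z : V)
    (hdistinct : ([w, x, y, z] : List V).Nodup)
    (hwx : D.HasDigon w x) (hxy : D.HasDigon x y) (hyz : D.HasDigon y z)
    (hdegx : D.degree x = 4) (hdegy : D.degree y = 4)
    (hverts : D'.verts = (D.verts.erase x).erase y)
    (harcs : D'.arcs =
      (D.arcs.filter fun a => a.1 ≠ x ∧ a.2 ≠ x ∧ a.1 ≠ y ∧ a.2 ≠ y) ∪
        {(w, z), (z, w)}) :
    D.potential ≤ D'.potential ∧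
      (¬ D.Dicolourable 2 → ¬ D'.Dicolourable 2) := by
  
  obtain ⟨hwx1, hwx2⟩ := hwx
  obtain ⟨hxy1, hxy2⟩ := hxy
  obtain ⟨hyz1, hyz2⟩ := hyz
  have hne : w ≠ x ∧ w ≠ y ∧ w ≠ z ∧ x ≠ y ∧ x ≠ z ∧ y ≠ z := by
    simp only [List.nodup_cons, List.mem_cons, List.mem_singleton, List.not_mem_nil,
      or_false, not_or, List.nodup_nil, and_true] at hdistinct
    tauto
  obtain ⟨hwx', hwy', hwz', hxy', hxz', hyz'⟩ := hne
  have hwv : w ∈ D.verts := (D.wf _ hwx1).1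
  have hxv : x ∈ D.verts := (D.wf _ hwx1).2.1
  have hyv : y ∈ D.verts := (D.wf _ hxy1).2.1
  have hzv : z ∈ D.verts := (D.wf _ hyz1).2.1
  -- the arcs incident to x are exactly the four thread arcs at x
  have hXcard : ({((w,x) : V × V), (x,w), (x,y), (y,x)} : Finset (V × V)).card = 4 := by
    rw [Finset.card_insert_of_notMem (by simp [Prod.ext_iff]; tauto),
      Finset.card_insert_of_notMem (by simp [Prod.ext_iff]; tauto),
      Finset.card_insert_of_notMem (by simp [Prod.ext_iff]; tauto),
      Finset.card_singleton]
  have hXarcs : D.arcs.filter (fun a => a.1 = x ∨ a.2 = x) = {(w,x),(x,w),(x,y),(y,x)} := by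
    refine (Finset.eq_of_subset_of_card_le ?_ ?_).symm
    · intro a ha
      simp only [Finset.mem_insert, Finset.mem_singleton] at ha
      rcases ha with rfl|rfl|rfl|rfl <;>
        simp [Finset.mem_filter, hwx1, hwx2, hxy1, hxy2]
    · rw [hXcard]; exact le_of_eq hdegx
  have hYcard : ({((x,y) : V × V), (y,x), (y,z), (z,y)} : Finset (V × V)).card = 4 := by
    rw [Finset.card_insert_of_notMem (by simp [Prod.ext_iff]; tauto),
      Finset.card_insert_of_notMem (by simp [Prod.ext_iff]; tauto),
      Finset.card_insert_of_notMem (by simp [Prod.ext_iff]; tauto),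
      Finset.card_singleton]
  have hYarcs : D.arcs.filter (fun a => a.1 = y ∨ a.2 = y) = {(x,y),(y,x),(y,z),(z,y)} := by
    refine (Finset.eq_of_subset_of_card_le ?_ ?_).symm
    · intro a ha
      simp only [Finset.mem_insert, Finset.mem_singleton] at ha
      rcases ha with rfl|rfl|rfl|rfl <;>
        simp [Finset.mem_filter, hxy1, hxy2, hyz1, hyz2]
    · rw [hYcard]; exact le_of_eq hdegy
  -- six arcs are incident to x or y
  have hneg : D.arcs.filter (fun a => ¬(a.1 ≠ x ∧ a.2 ≠ x ∧ a.1 ≠ y ∧ a.2 ≠ y))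
      = {(w,x),(x,w),(x,y),(y,x),(y,z),(z,y)} := by
    ext a
    simp only [Finset.mem_filter, not_and_or, not_not, ne_eq]
    constructor
    · rintro ⟨ha, hc⟩
      have hx4 : (a.1 = x ∨ a.2 = x) → a ∈ ({((w,x) : V × V), (x,w), (x,y), (y,x)} : Finset (V × V)) := by
        intro h; rw [← hXarcs]; exact Finset.mem_filter.mpr ⟨ha, h⟩
      have hy4 : (a.1 = y ∨ a.2 = y) → a ∈ ({((x,y) : V × V), (y,x), (y,z), (z,y)} : Finset (V × V)) := by
        intro h; rw [← hYarcs]; exact Finset.mem_filter.mpr ⟨ha, h⟩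
      rcases hc with h|h|h|h
      · have h' := hx4 (Or.inl h)
        simp only [Finset.mem_insert, Finset.mem_singleton] at h'
        rcases h' with rfl|rfl|rfl|rfl <;> simp
      · have h' := hx4 (Or.inr h)
        simp only [Finset.mem_insert, Finset.mem_singleton] at h'
        rcases h' with rfl|rfl|rfl|rfl <;> simp
      · have h' := hy4 (Or.inl h)
        simp only [Finset.mem_insert, Finset.mem_singleton] at h'
        rcases h' with rfl|rfl|rfl|rfl <;> simp
      · have h' := hy4 (Or.inr h)
        simp only [Finset.mem_insert, Finset.mem_singleton] at h'
        rcases h' with rfl|rfl|rfl|rfl <;> simp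
    · intro h
      simp only [Finset.mem_insert, Finset.mem_singleton] at h
      rcases h with rfl|rfl|rfl|rfl|rfl|rfl <;>
        simp [hwx1, hwx2, hxy1, hxy2, hyz1, hyz2]
  have h6card : ({((w,x) : V × V),(x,w),(x,y),(y,x),(y,z),(z,y)} : Finset (V × V)).card = 6 := by
    rw [Finset.card_insert_of_notMem (by simp [Prod.ext_iff]; tauto),
      Finset.card_insert_of_notMem (by simp [Prod.ext_iff]; tauto),
      Finset.card_insert_of_notMem (by simp [Prod.ext_iff]; tauto),
      Finset.card_insert_of_notMem (by simp [Prod.ext_iff]; tauto),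
      Finset.card_insert_of_notMem (by simp [Prod.ext_iff]; tauto),
      Finset.card_singleton]
  have hmfilter : (D.arcs.filter fun a => a.1 ≠ x ∧ a.2 ≠ x ∧ a.1 ≠ y ∧ a.2 ≠ y).card + 6 = D.m := by
    have h := Finset.card_filter_add_card_filter_not
      (s := D.arcs) (p := fun a : V × V => a.1 ≠ x ∧ a.2 ≠ x ∧ a.1 ≠ y ∧ a.2 ≠ y)
    rw [hneg, h6card] at h
    exact h
  have hm4 : D'.m + 4 ≤ D.m := by
    have h1 : D'.arcs.card ≤
        (D.arcs.filter fun a => a.1 ≠ x ∧ a.2 ≠ x ∧ a.1 ≠ y ∧ a.2 ≠ y).card + 2 := by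
      rw [harcs]
      refine (Finset.card_union_le _ _).trans ?_
      have : ({((w,z) : V × V), (z,w)} : Finset (V × V)).card ≤ 2 :=
        (Finset.card_insert_le _ _).trans (by simp)
      omega
    show D'.arcs.card + 4 ≤ D.m
    omega
  have hn2 : D.n = D'.n + 2 := by
    have hyx : y ∈ D.verts.erase x := Finset.mem_erase.mpr ⟨Ne.symm hxy', hyv⟩
    have h1 : D'.verts.card = (D.verts.erase x).card - 1 := by
      rw [hverts, Finset.card_erase_of_mem hyx]
    have h2 : (D.verts.erase x).card = D.verts.card - 1 := Finset.card_erase_of_mem hxv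
    have h3 : 0 < (D.verts.erase x).card := Finset.card_pos.mpr ⟨y, hyx⟩
    show D.verts.card = D'.verts.card + 2
    omega
  -- the matching number
  have hbddD : BddAbove {k | ∃ M : Finset (V × V), D.IsDigonMatching M ∧ M.card = k} := by
    refine ⟨D.m, fun k hk => ?_⟩
    obtain ⟨M, hM, rfl⟩ := hk
    refine Finset.card_le_card fun p hp => ?_
    exact (hM.1 p hp).1
  have hbdd' : BddAbove {k | ∃ M : Finset (V × V), D'.IsDigonMatching M ∧ M.card = k} := by
    refine ⟨D'.m, fun k hk => ?_⟩
    obtain ⟨M, hM, rfl⟩ := hk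
    refine Finset.card_le_card fun p hp => ?_
    exact (hM.1 p hp).1
  have hne0' : {k | ∃ M : Finset (V × V), D'.IsDigonMatching M ∧ M.card = k}.Nonempty :=
    ⟨0, ∅, ⟨fun p hp => absurd hp (Finset.notMem_empty p),
      fun p hp => absurd hp (Finset.notMem_empty p)⟩, Finset.card_empty⟩
  have hmax : ∃ M : Finset (V × V), D'.IsDigonMatching M ∧ M.card = D'.piNum :=
    Nat.sSup_mem hne0' hbdd'
  obtain ⟨M', hM', hMcard⟩ := hmax
  have hq_comp : ∀ q ∈ M', q ≠ ((w,z) : V × V) → q ≠ ((z,w) : V × V) →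
      q.1 ≠ x ∧ q.2 ≠ x ∧ q.1 ≠ y ∧ q.2 ≠ y ∧ (q.1,q.2) ∈ D.arcs ∧ (q.2,q.1) ∈ D.arcs := by
    rintro ⟨q1, q2⟩ hq hq1 hq2
    obtain ⟨h1, h2⟩ := hM'.1 _ hq
    rw [harcs] at h1 h2
    simp only [Finset.mem_union, Finset.mem_filter, Finset.mem_insert,
      Finset.mem_singleton, Prod.mk.injEq, ne_eq] at h1 h2 hq1 hq2
    rcases h1 with ⟨ha, hb⟩ | ⟨e1, e2⟩ | ⟨e1, e2⟩
    · rcases h2 with ⟨ha', _⟩ | ⟨e1, e2⟩ | ⟨e1, e2⟩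
      · exact ⟨hb.1, hb.2.1, hb.2.2.1, hb.2.2.2, ha, ha'⟩
      · exact absurd ⟨e2, e1⟩ hq2
      · exact absurd ⟨e2, e1⟩ hq1
    · exact absurd ⟨e1, e2⟩ hq1
    · exact absurd ⟨e1, e2⟩ hq2
  have hpi : D'.piNum + 1 ≤ D.piNum := by
    by_cases hcase : ((w,z) : V × V) ∈ M' ∨ ((z,w) : V × V) ∈ M'
    · obtain ⟨p, hp, hpwz⟩ : ∃ p ∈ M', p = ((w,z) : V × V) ∨ p = ((z,w) : V × V) := by
        rcases hcase with h|h
        exacts [⟨_, h, Or.inl rfl⟩, ⟨_, h, Or.inr rfl⟩]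
      have hqwz : ∀ q ∈ M', q ≠ p → q.1 ≠ w ∧ q.1 ≠ z ∧ q.2 ≠ w ∧ q.2 ≠ z := by
        intro q hq hqp
        have h := hM'.2 p hp q hq (Ne.symm hqp)
        rcases hpwz with rfl | rfl
        · exact ⟨Ne.symm h.1, Ne.symm h.2.2.1, Ne.symm h.2.1, Ne.symm h.2.2.2⟩
        · exact ⟨Ne.symm h.2.2.1, Ne.symm h.1, Ne.symm h.2.2.2, Ne.symm h.2.1⟩
      have hold : ∀ q ∈ M'.erase p,
          q.1 ≠ x ∧ q.2 ≠ x ∧ q.1 ≠ y ∧ q.2 ≠ y ∧ q.1 ≠ w ∧ q.2 ≠ w ∧ q.1 ≠ z ∧ q.2 ≠ z ∧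
            (q.1,q.2) ∈ D.arcs ∧ (q.2,q.1) ∈ D.arcs := by
        intro q hq'
        obtain ⟨hqp, hq⟩ := Finset.mem_erase.mp hq'
        obtain ⟨e1, e2, e3, e4⟩ := hqwz q hq hqp
        have h1 : q ≠ ((w,z) : V × V) := fun h => e1 (by rw [h])
        have h2 : q ≠ ((z,w) : V × V) := fun h => e2 (by rw [h])
        obtain ⟨f1, f2, f3, f4, f5, f6⟩ := hq_comp q hq h1 h2
        exact ⟨f1, f2, f3, f4, e1, e3, e2, e4, f5, f6⟩
      set M : Finset (V × V) := insert (w,x) (insert (y,z) (M'.erase p)) with hM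
      have hwxnotin : ((w,x) : V × V) ∉ insert ((y,z) : V × V) (M'.erase p) := by
        simp only [Finset.mem_insert, Prod.mk.injEq, not_or]
        refine ⟨fun h => hwy' h.1, fun h => (hold _ h).2.2.2.2.1 rfl⟩
      have hyznotin : ((y,z) : V × V) ∉ M'.erase p := fun h => (hold _ h).2.2.2.2.2.2.2.1 rfl
      have hp1 : 1 ≤ M'.card := Finset.card_pos.mpr ⟨p, hp⟩
      have hcardM : M.card = M'.card + 1 := by
        rw [hM, Finset.card_insert_of_notMem hwxnotin,
          Finset.card_insert_of_notMem hyznotin, Finset.card_erase_of_mem hp]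
        omega
      have hmatch : D.IsDigonMatching M := by
        constructor
        · intro q hq
          rw [hM] at hq
          simp only [Finset.mem_insert] at hq
          rcases hq with rfl | rfl | hq
          · exact ⟨hwx1, hwx2⟩
          · exact ⟨hyz1, hyz2⟩
          · exact ⟨(hold _ hq).2.2.2.2.2.2.2.2.1, (hold _ hq).2.2.2.2.2.2.2.2.2⟩
        · intro a ha b hb hab
          rw [hM] at ha hb
          simp only [Finset.mem_insert] at ha hb
          rcases ha with rfl | rfl | ha <;> rcases hb with rfl | rfl | hb
          · exact absurd rfl hab
          · exact ⟨hwy', hwz', hxy', hxz'⟩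
          · obtain ⟨f1, f2, f3, f4, f5, f6, f7, f8, -⟩ := hold _ hb
            exact ⟨Ne.symm f5, Ne.symm f6, Ne.symm f1, Ne.symm f2⟩
          · exact ⟨Ne.symm hwy', Ne.symm hxy', Ne.symm hwz', Ne.symm hxz'⟩
          · exact absurd rfl hab
          · obtain ⟨f1, f2, f3, f4, f5, f6, f7, f8, -⟩ := hold _ hb
            exact ⟨Ne.symm f3, Ne.symm f4, Ne.symm f7, Ne.symm f8⟩
          · obtain ⟨f1, f2, f3, f4, f5, f6, f7, f8, -⟩ := hold _ ha
            exact ⟨f5, f1, f6, f2⟩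
          · obtain ⟨f1, f2, f3, f4, f5, f6, f7, f8, -⟩ := hold _ ha
            exact ⟨f3, f7, f4, f8⟩
          · exact hM'.2 a (Finset.mem_of_mem_erase ha) b (Finset.mem_of_mem_erase hb) hab
      have hmem : M.card ∈ {k | ∃ N : Finset (V × V), D.IsDigonMatching N ∧ N.card = k} :=
        ⟨M, hmatch, rfl⟩
      have hle : M.card ≤ D.piNum := le_csSup hbddD hmem
      omega
    · push_neg at hcase
      have hall : ∀ q ∈ M', q ≠ ((w,z) : V × V) ∧ q ≠ ((z,w) : V × V) := by
        intro q hq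
        exact ⟨fun h => hcase.1 (h ▸ hq), fun h => hcase.2 (h ▸ hq)⟩
      have hxynotin : ((x,y) : V × V) ∉ M' := fun h =>
        (hq_comp _ h (hall _ h).1 (hall _ h).2).1 rfl
      set M : Finset (V × V) := insert (x,y) M' with hM
      have hcardM : M.card = M'.card + 1 := by
        rw [hM, Finset.card_insert_of_notMem hxynotin]
      have hmatch : D.IsDigonMatching M := by
        constructor
        · intro q hq
          rw [hM] at hq
          simp only [Finset.mem_insert] at hq
          rcases hq with rfl | hq
          · exact ⟨hxy1, hxy2⟩
          · obtain ⟨-, -, -, -, f5, f6⟩ := hq_comp q hq (hall _ hq).1 (hall _ hq).2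
            exact ⟨f5, f6⟩
        · intro a ha b hb hab
          rw [hM] at ha hb
          simp only [Finset.mem_insert] at ha hb
          rcases ha with rfl | ha <;> rcases hb with rfl | hb
          · exact absurd rfl hab
          · obtain ⟨f1, f2, f3, f4, -⟩ := hq_comp b hb (hall _ hb).1 (hall _ hb).2
            exact ⟨Ne.symm f1, Ne.symm f2, Ne.symm f3, Ne.symm f4⟩
          · obtain ⟨f1, f2, f3, f4, -⟩ := hq_comp a ha (hall _ ha).1 (hall _ ha).2
            exact ⟨f1, f3, f2, f4⟩
          · exact hM'.2 a ha b hb hab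
      have hmem : M.card ∈ {k | ∃ N : Finset (V × V), D.IsDigonMatching N ∧ N.card = k} :=
        ⟨M, hmatch, rfl⟩
      have hle : M.card ≤ D.piNum := le_csSup hbddD hmem
      omega
  constructor
  · show (7 : ℤ) * D.n - 3 * D.m - 2 * D.piNum ≤ 7 * D'.n - 3 * D'.m - 2 * D'.piNum
    omega
  · intro hD hD'c
    apply hD
    obtain ⟨φ, hφ⟩ := hD'c
    have hwv' : w ∈ D'.verts := by
      rw [hverts]
      exact Finset.mem_erase.mpr ⟨hwy', Finset.mem_erase.mpr ⟨hwx', hwv⟩⟩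
    have hzv' : z ∈ D'.verts := by
      rw [hverts]
      exact Finset.mem_erase.mpr ⟨Ne.symm hyz', Finset.mem_erase.mpr ⟨Ne.symm hxz', hzv⟩⟩
    have hwzarc : ((w,z) : V × V) ∈ D'.arcs := by rw [harcs]; simp
    have hzwarc : ((z,w) : V × V) ∈ D'.arcs := by rw [harcs]; simp
    have hcol : φ w ≠ φ z := by
      intro heq
      apply hφ (φ w)
      refine ⟨[w, z], by simp [hwz'], by simp, ?_, ?_⟩
      · intro v hv
        simp only [List.mem_cons, List.mem_singleton, List.not_mem_nil, or_false] at hv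
        rcases hv with rfl | rfl
        · exact Finset.mem_filter.mpr ⟨hwv', rfl⟩
        · exact Finset.mem_filter.mpr ⟨hzv', heq.symm⟩
      · rw [cyclicArcs_pair]
        intro a ha
        simp only [Finset.mem_insert, Finset.mem_singleton] at ha
        rcases ha with rfl | rfl
        exacts [hwzarc, hzwarc]
    set ψ : V → Fin 2 := fun v => if v = x then φ z else if v = y then φ w else φ v with hψdef
    have hψx : ψ x = φ z := by simp [hψdef]
    have hψy : ψ y = φ w := by simp [hψdef, Ne.symm hxy']
    have hψo : ∀ v, v ≠ x → v ≠ y → ψ v = φ v := by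
      intro v h1 h2; simp [hψdef, h1, h2]
    refine ⟨ψ, ?_⟩
    intro i
    rintro ⟨c, hnd, hlen, hmem, hsub⟩
    have hxc : x ∉ c := by
      intro hx
      obtain ⟨s, hs, hvs⟩ := mem_cyclicArcs_fst hx
      have hsarc : ((x, s) : V × V) ∈ D.arcs := hsub hvs
      have hmem4 : ((x, s) : V × V) ∈ D.arcs.filter (fun a => a.1 = x ∨ a.2 = x) :=
        Finset.mem_filter.mpr ⟨hsarc, Or.inl rfl⟩
      rw [hXarcs] at hmem4
      simp only [Finset.mem_insert, Finset.mem_singleton, Prod.mk.injEq] at hmem4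
      have hxi : ψ x = i := (Finset.mem_filter.mp (hmem x hx)).2
      have hsi : ψ s = i := (Finset.mem_filter.mp (hmem s hs)).2
      rcases hmem4 with ⟨h1, -⟩ | ⟨-, h2⟩ | ⟨-, h2⟩ | ⟨h1, -⟩
      · exact hwx' h1.symm
      · rw [h2] at hsi
        rw [hψo w hwx' hwy'] at hsi
        rw [hψx] at hxi
        exact hcol (hsi.trans hxi.symm)
      · rw [h2] at hsi
        rw [hψy] at hsi
        rw [hψx] at hxi
        exact hcol (hsi.trans hxi.symm)
      · exact hxy' h1
    have hyc : y ∉ c := by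
      intro hy
      obtain ⟨s, hs, hvs⟩ := mem_cyclicArcs_fst hy
      have hsarc : ((y, s) : V × V) ∈ D.arcs := hsub hvs
      have hmem4 : ((y, s) : V × V) ∈ D.arcs.filter (fun a => a.1 = y ∨ a.2 = y) :=
        Finset.mem_filter.mpr ⟨hsarc, Or.inl rfl⟩
      rw [hYarcs] at hmem4
      simp only [Finset.mem_insert, Finset.mem_singleton, Prod.mk.injEq] at hmem4
      have hyi : ψ y = i := (Finset.mem_filter.mp (hmem y hy)).2
      have hsi : ψ s = i := (Finset.mem_filter.mp (hmem s hs)).2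
      rcases hmem4 with ⟨h1, -⟩ | ⟨-, h2⟩ | ⟨-, h2⟩ | ⟨h1, -⟩
      · exact hxy' h1.symm
      · rw [h2] at hsi
        rw [hψx] at hsi
        rw [hψy] at hyi
        exact hcol (hyi.trans hsi.symm)
      · rw [h2] at hsi
        rw [hψo z (Ne.symm hxz') (Ne.symm hyz')] at hsi
        rw [hψy] at hyi
        exact hcol (hyi.trans hsi.symm)
      · exact hyz' h1
    apply hφ i
    refine ⟨c, hnd, hlen, ?_, ?_⟩
    · intro v hv
      have h := Finset.mem_filter.mp (hmem v hv)
      have hvx : v ≠ x := fun h' => hxc (h' ▸ hv)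
      have hvy : v ≠ y := fun h' => hyc (h' ▸ hv)
      refine Finset.mem_filter.mpr ⟨?_, ?_⟩
      · rw [hverts]
        exact Finset.mem_erase.mpr ⟨hvy, Finset.mem_erase.mpr ⟨hvx, h.1⟩⟩
      · rw [← hψo v hvx hvy]; exact h.2
    · intro a ha
      have hac := mem_of_mem_cyclicArcs ha
      have haD := hsub ha
      rw [harcs]
      refine Finset.mem_union_left _ (Finset.mem_filter.mpr ⟨haD, ?_, ?_, ?_, ?_⟩)
      exacts [fun h => hxc (h ▸ hac.1), fun h => hxc (h ▸ hac.2),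
        fun h => hyc (h ▸ hac.1), fun h => hyc (h ▸ hac.2)]
end

section
/- Let D be a digraph with χ⃗(D) ≥ 3 and let R ⊊ V(D) be such that D[R] is 2-dicolourable. Then for any 2-dicolouring φ of D[R], the digraph D/(R, φ, X) satisfies χ⃗(D/(R, φ, X)) ≥ 3. -/
namespace DigraphAux
variable {V : Type*} [DecidableEq V]
set_option linter.unusedSectionVars false
open List

lemma zip_tail_last : ∀ (t : List V) (a x : V),
    (a :: t).zip (t ++ [x]) = (a :: t).zip t ++ [((a :: t).getLast (by simp), x)] := by
  intro t
  induction t with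
  | nil => intro a x; simp
  | cons b t' ih =>
    intro a x
    have h1 : (a :: b :: t').zip (b :: t' ++ [x]) = (a, b) :: (b :: t').zip (t' ++ [x]) := by
      simp [List.zip_cons_cons]
    rw [h1, ih b x]
    have h2 : (a :: b :: t').getLast (by simp) = (b :: t').getLast (by simp) :=
      List.getLast_cons (by simp)
    rw [h2]
    simp [List.zip_cons_cons]

lemma cyclic_zip (c : List V) (h : c ≠ []) :
    c.zip (c.rotate 1) = c.zip c.tail ++ [(c.getLast h, c.head h)] := by
  match c, h with
  | a :: t, _ =>
    have hr : (a :: t).rotate 1 = t ++ [a] := by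
      rw [List.rotate_cons_succ, List.rotate_zero]
    rw [hr]
    simpa using zip_tail_last t a a

lemma chain'_iff_zip (Rr : V → V → Prop) :
    ∀ c : List V, c.IsChain Rr ↔ ∀ p ∈ c.zip c.tail, Rr p.1 p.2 := by
  intro c
  induction c with
  | nil => simp
  | cons a t ih =>
    cases t with
    | nil => simp
    | cons b t' =>
      rw [List.isChain_cons_cons]
      constructor
      · rintro ⟨hab, hc⟩ p hp
        simp only [List.tail_cons, List.zip_cons_cons, List.mem_cons] at hp
        rcases hp with rfl | hp
        · exact hab
        · exact (ih.1 hc) p (by simpa using hp)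
      · intro hall
        refine ⟨hall (a, b) (by simp [List.zip_cons_cons]), ih.2 ?_⟩
        intro p hp
        exact hall p (by simp only [List.tail_cons, List.zip_cons_cons]; exact List.mem_cons_of_mem _ hp)

/-- A closed walk predicate. -/
def CWalk (A : Finset (V × V)) (c : List V) : Prop :=
  c.IsChain (fun u v => (u, v) ∈ A) ∧ ∀ x ∈ c.getLast?, ∀ y ∈ c.head?, (x, y) ∈ A

lemma cwalk_iff (A : Finset (V × V)) (c : List V) (h : c ≠ []) :
    (∀ p ∈ c.zip (c.rotate 1), p ∈ A) ↔ CWalk A c := by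
  rw [cyclic_zip c h]
  constructor
  · intro hall
    refine ⟨(chain'_iff_zip _ c).2 fun p hp => hall p (List.mem_append_left _ hp), ?_⟩
    intro x hx y hy
    rw [List.getLast?_eq_getLast h] at hx
    rw [List.head?_eq_head h] at hy
    simp only [Option.mem_def, Option.some.injEq] at hx hy
    subst hx; subst hy
    exact hall _ (List.mem_append_right _ (by simp))
  · rintro ⟨hch, hwrap⟩ p hp
    rcases List.mem_append.1 hp with hp | hp
    · exact (chain'_iff_zip _ c).1 hch p hp
    · simp only [List.mem_singleton] at hp
      subst hp
      exact hwrap _ (by rw [List.getLast?_eq_getLast h]; rfl) _ (by rw [List.head?_eq_head h]; rfl)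

lemma not_chain'_decomp (Rr : V → V → Prop) :
    ∀ c : List V, ¬ c.IsChain Rr → ∃ (l₁ : List V) (a b : V) (l₂ : List V),
      c = l₁ ++ a :: b :: l₂ ∧ ¬ Rr a b := by
  intro c
  induction c with
  | nil => intro h; exact absurd List.isChain_nil h
  | cons a t ih =>
    intro h
    cases t with
    | nil => exact absurd (List.isChain_singleton a) h
    | cons b t' =>
      rw [List.isChain_cons_cons] at h
      by_cases hab : Rr a b
      · have hnc : ¬ (b :: t').IsChain Rr := fun hc => h ⟨hab, hc⟩
        obtain ⟨l₁, u, v, l₂, heq, huv⟩ := ih hnc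
        exact ⟨a :: l₁, u, v, l₂, by rw [heq]; rfl, huv⟩
      · exact ⟨[], a, b, t', rfl, hab⟩

lemma dup_decomp {c : List V} (h : ¬ c.Nodup) :
    ∃ (l₁ : List V) (x : V) (l₂ l₃ : List V), c = l₁ ++ x :: l₂ ++ x :: l₃ := by
  obtain ⟨x, hx⟩ := List.exists_duplicate_iff_not_nodup.2 h
  clear h
  induction hx with
  | cons_mem hm =>
    obtain ⟨s, t, rfl⟩ := List.append_of_mem hm
    exact ⟨[], x, s, t, rfl⟩
  | @cons_duplicate y l hd ih =>
    obtain ⟨l₁, z, l₂, l₃, heq⟩ := ih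
    exact ⟨y :: l₁, z, l₂, l₃, by rw [heq]; rfl⟩

end DigraphAux

namespace DigraphAux
variable {V : Type*} [DecidableEq V]
open List

lemma walk_to_cycle (A : Finset (V × V)) (S : Finset V)
    (hA : ∀ a ∈ A, a.1 ≠ a.2) :
    ∀ (n : ℕ) (c : List V), c.length ≤ n → 2 ≤ c.length → (∀ v ∈ c, v ∈ S) →
    CWalk A c →
    ∃ c', c'.Nodup ∧ 2 ≤ c'.length ∧ (∀ v ∈ c', v ∈ S) ∧ CWalk A c' := by
  intro n
  induction n with
  | zero => intro c hle h2 _ _; omega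
  | succ n ih =>
    intro c hle h2 hS hw
    by_cases hnd : c.Nodup
    · exact ⟨c, hnd, h2, hS, hw⟩
    obtain ⟨l₁, x, l₂, l₃, rfl⟩ := dup_decomp hnd
    obtain ⟨hch, _⟩ := hw
    have hre : l₁ ++ x :: l₂ ++ x :: l₃ = (l₁ ++ (x :: l₂)) ++ (x :: l₃) := by simp
    rw [hre] at hch
    obtain ⟨hch1, hch2, hlink⟩ := List.isChain_append.1 hch
    have hlast : (l₁ ++ (x :: l₂)).getLast? = some ((x :: l₂).getLast (by simp)) := by
      rw [List.getLast?_append, List.getLast?_eq_getLast (l := x :: l₂) (by simp)]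
      rfl
    have harc : ((x :: l₂).getLast (by simp), x) ∈ A := by
      exact hlink _ (by rw [hlast]; rfl) x rfl
    have hl₂ : l₂ ≠ [] := by
      rintro rfl
      exact hA _ harc (by simp)
    have hcw : CWalk A (x :: l₂) := by
      refine ⟨(List.isChain_append.1 hch1).2.1, ?_⟩
      intro a ha b hb
      rw [List.getLast?_eq_getLast (l := x :: l₂) (by simp)] at ha
      simp only [Option.mem_def, Option.some.injEq, List.head?_cons] at ha hb
      subst ha; subst hb
      exact harc
    have hlen2 : 2 ≤ (x :: l₂).length := by
      cases l₂ with
      | nil => exact absurd rfl hl₂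
      | cons _ _ => simp
    have hlen : (x :: l₂).length ≤ n := by
      simp only [List.length_append, List.length_cons] at hle ⊢
      omega
    refine ih (x :: l₂) hlen hlen2 ?_ hcw
    intro v hv
    apply hS
    simp only [List.mem_cons, List.mem_append] at hv ⊢
    tauto

lemma deloop (A : Finset (V × V)) (S : Finset V) :
    ∀ (n : ℕ) (c : List V), c.length ≤ n → 2 ≤ c.toFinset.card → (∀ v ∈ c, v ∈ S) →
    c.IsChain (fun u v => (u, v) ∈ A ∨ u = v) →
    (∀ x ∈ c.getLast?, ∀ y ∈ c.head?, (x, y) ∈ A ∨ x = y) →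
    ∃ c', 2 ≤ c'.length ∧ (∀ v ∈ c', v ∈ S) ∧ CWalk A c' := by
  intro n
  induction n with
  | zero =>
    intro c hle hcard _ _ _
    have := List.toFinset_card_le c
    omega
  | succ n ih =>
    intro c hle hcard hS hch hwrap
    have hlen2 : 2 ≤ c.length := le_trans hcard (List.toFinset_card_le c)
    have hne : c ≠ [] := by
      intro h; subst h; simp at hlen2
    by_cases hw : c.getLast hne = c.head hne
    · -- remove last element
      have hdle : c.dropLast ≠ [] := by
        have hl : c.dropLast.length = c.length - 1 := by simp
        intro h; rw [h] at hl; simp at hl; omega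
      have hhead : c.dropLast.head hdle = c.head hne := List.head_dropLast hdle
      have hsplit : c.dropLast ++ [c.getLast hne] = c := List.dropLast_append_getLast hne
      have hts : c.toFinset = c.dropLast.toFinset := by
        conv_lhs => rw [← hsplit]
        rw [List.toFinset_append]
        apply Finset.union_eq_left.2
        intro y hy
        simp only [List.toFinset_cons, List.toFinset_nil, LawfulSingleton.insert_empty_eq,
          Finset.mem_singleton] at hy
        subst hy
        rw [hw, ← hhead]
        exact List.mem_toFinset.2 (List.head_mem hdle)
      have hchd := hch
      rw [← hsplit] at hchd
      obtain ⟨hch1, _, hlink⟩ := List.isChain_append.1 hchd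
      have hwrap' : ∀ x ∈ c.dropLast.getLast?, ∀ y ∈ c.dropLast.head?, (x, y) ∈ A ∨ x = y := by
        intro x hx y hy
        rw [List.head?_eq_head hdle] at hy
        simp only [Option.mem_def, Option.some.injEq] at hy
        subst hy
        have := hlink x hx (c.getLast hne) rfl
        rwa [hw, ← hhead] at this
      refine ih c.dropLast ?_ ?_ ?_ hch1 hwrap'
      · have : c.dropLast.length = c.length - 1 := by simp
        omega
      · rw [← hts]; exact hcard
      · exact fun v hv => hS v (List.dropLast_subset c hv)
    · by_cases hchne : c.IsChain (fun u v : V => u ≠ v)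
      · -- c itself works
        refine ⟨c, hlen2, hS, ?_, ?_⟩
        · rw [chain'_iff_zip] at hchne ⊢
          rw [chain'_iff_zip] at hch
          intro p hp
          rcases hch p hp with h | h
          · exact h
          · exact absurd h (hchne p hp)
        · intro a ha b hb
          rcases hwrap a ha b hb with h | h
          · exact h
          · rw [List.getLast?_eq_getLast hne] at ha
            rw [List.head?_eq_head hne] at hb
            simp only [Option.mem_def, Option.some.injEq] at ha hb
            subst ha; subst hb
            exact absurd h hw
      · -- consecutive duplicate
        obtain ⟨l₁, a, b, l₂, heq, hab⟩ := not_chain'_decomp _ c hchne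
        simp only [ne_eq, not_not] at hab
        subst hab
        subst heq
        have hts : (l₁ ++ a :: a :: l₂).toFinset = (l₁ ++ a :: l₂).toFinset := by
          simp [List.toFinset_append, List.toFinset_cons]
        obtain ⟨hc1, hc2, hc3⟩ := List.isChain_append.1 hch
        have hch' : (l₁ ++ a :: l₂).IsChain (fun u v => (u, v) ∈ A ∨ u = v) := by
          refine List.isChain_append.2 ⟨hc1, (List.isChain_cons_cons.1 hc2).2, ?_⟩
          intro x hx y hy
          exact hc3 x hx y (by simpa using hy)
        have hg : (l₁ ++ a :: a :: l₂).getLast? = (l₁ ++ a :: l₂).getLast? := by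
          rw [List.getLast?_append, List.getLast?_append, List.getLast?_cons_cons]
        have hh : (l₁ ++ a :: a :: l₂).head? = (l₁ ++ a :: l₂).head? := by
          rw [List.head?_append, List.head?_append]; rfl
        have hwrap' : ∀ x ∈ (l₁ ++ a :: l₂).getLast?, ∀ y ∈ (l₁ ++ a :: l₂).head?,
            (x, y) ∈ A ∨ x = y := by
          intro x hx y hy
          exact hwrap x (by rw [hg]; exact hx) y (by rw [hh]; exact hy)
        refine ih (l₁ ++ a :: l₂) ?_ ?_ ?_ hch' hwrap'
        · simp only [List.length_append, List.length_cons] at hle ⊢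
          omega
        · rw [← hts]; exact hcard
        · intro v hv
          apply hS
          simp only [List.mem_append, List.mem_cons] at hv ⊢
          tauto

end DigraphAux

namespace DigraphAux
variable {V : Type*} [DecidableEq V]
open List Digraph'

lemma cyclicArcs_subset_iff (A : Finset (V × V)) (c : List V) (h : c ≠ []) :
    Digraph'.cyclicArcs c ⊆ A ↔ CWalk A c := by
  rw [← cwalk_iff A c h]
  constructor
  · intro hs p hp; exact hs (List.mem_toFinset.2 hp)
  · intro hs p hp; exact hs p (List.mem_toFinset.1 hp)

lemma dicolourable_mono (D : Digraph' V) {k l : ℕ} (h : D.Dicolourable k) (hkl : k ≤ l) :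
    D.Dicolourable l := by
  obtain ⟨φ, hφ⟩ := h
  refine ⟨fun v => Fin.castLE hkl (φ v), ?_⟩
  intro i
  rintro ⟨c, hnd, hlen, hmem, harc⟩
  have hcne : c ≠ [] := by intro h'; subst h'; simp at hlen
  obtain ⟨v₀, hv₀⟩ := List.exists_mem_of_ne_nil c hcne
  have h₀ := Finset.mem_filter.1 (hmem v₀ hv₀)
  refine hφ (φ v₀) ⟨c, hnd, hlen, ?_, harc⟩
  intro v hv
  have h₁ := Finset.mem_filter.1 (hmem v hv)
  refine Finset.mem_filter.2 ⟨h₁.1, ?_⟩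
  exact Fin.castLE_injective hkl (h₁.2.trans h₀.2.symm)

lemma dicolourable_card (D : Digraph' V) : D.Dicolourable (D.verts.card + 1) := by
  refine ⟨fun v => ⟨(D.verts.toList).idxOf v % (D.verts.card + 1),
    Nat.mod_lt _ (Nat.succ_pos _)⟩, ?_⟩
  intro i
  rintro ⟨c, hnd, hlen, hmem, _⟩
  match c, hnd, hlen, hmem with
  | a :: b :: t, hnd, _, hmem =>
    have hab : a ≠ b := by
      intro h; subst h; simp at hnd
    have ha := Finset.mem_filter.1 (hmem a (by simp))
    have hb := Finset.mem_filter.1 (hmem b (by simp))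
    have hia : (D.verts.toList).idxOf a < D.verts.card := by
      have := List.idxOf_lt_length_iff.2 (Finset.mem_toList.2 ha.1)
      rwa [Finset.length_toList] at this
    have hib : (D.verts.toList).idxOf b < D.verts.card := by
      have := List.idxOf_lt_length_iff.2 (Finset.mem_toList.2 hb.1)
      rwa [Finset.length_toList] at this
    have hvv := congrArg Fin.val (ha.2.trans hb.2.symm)
    simp only [Nat.mod_eq_of_lt (by omega : (D.verts.toList).idxOf a < D.verts.card + 1),
      Nat.mod_eq_of_lt (by omega : (D.verts.toList).idxOf b < D.verts.card + 1)] at hvv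
    exact hab ((List.idxOf_inj (Finset.mem_toList.2 ha.1)).1 hvv)

end DigraphAux

open Digraph' in
/-- Let `D` be a digraph with `χ⃗(D) ≥ 3` and `R ⊊ V(D)` with
`D[R]` 2-dicolourable. For any 2-dicolouring `φ` of `D[R]`, the digraph
`D' = D/(R, φ, X)` — obtained by contracting each colour class `φ⁻¹(i)` into a
new vertex `xᵢ`, adding a digon between `x₁` and `x₂`, and removing loops and
multiple arcs — satisfies `χ⃗(D') ≥ 3`. -/
theorem contraction_dichromatic_ge_three {V : Type*} [DecidableEq V]
    (D D' : Digraph' V) (R : Finset V) (φ : V → Fin 2) (x₁ x₂ : V)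
    (hchi : 3 ≤ D.dichromatic)
    (hR : R ⊆ D.verts) (hRproper : R ≠ D.verts)
    (hφ : (D.induce R).IsDicolouring 2 φ)
    (hx₁ : x₁ ∉ D.verts) (hx₂ : x₂ ∉ D.verts) (hx : x₁ ≠ x₂)
    (hverts : D'.verts = (D.verts \ R) ∪ {x₁, x₂})
    (harcs : D'.arcs =
      (D.arcs.filter fun a => a.1 ∉ R ∧ a.2 ∉ R) ∪ {(x₁, x₂), (x₂, x₁)} ∪
        ((D.arcs.filter fun a => a.1 ∈ R ∧ a.2 ∉ R).image
          fun a => (if φ a.1 = 0 then x₁ else x₂, a.2)) ∪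
        ((D.arcs.filter fun a => a.1 ∉ R ∧ a.2 ∈ R).image
          fun a => (a.1, if φ a.2 = 0 then x₁ else x₂))) :
    3 ≤ D'.dichromatic := by
  
  by_contra hlt
  push_neg at hlt
  have h2 : D'.Dicolourable 2 := by
    have hmem : D'.dichromatic ∈ {k | D'.Dicolourable k} :=
      Nat.sInf_mem ⟨D'.verts.card + 1, DigraphAux.dicolourable_card D'⟩
    exact DigraphAux.dicolourable_mono D' hmem (by omega)
  obtain ⟨ψ, hψ⟩ := h2
  have hx₁' : x₁ ∈ D'.verts := by rw [hverts]; simp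
  have hx₂' : x₂ ∈ D'.verts := by rw [hverts]; simp
  have harc₁₂ : (x₁, x₂) ∈ D'.arcs := by
    rw [harcs]
    exact Finset.mem_union_left _ (Finset.mem_union_left _
      (Finset.mem_union_right _ (by simp)))
  have harc₂₁ : (x₂, x₁) ∈ D'.arcs := by
    rw [harcs]
    exact Finset.mem_union_left _ (Finset.mem_union_left _
      (Finset.mem_union_right _ (by simp)))
  have hψx : ψ x₁ ≠ ψ x₂ := by
    intro heq
    have hcy : Digraph'.cyclicArcs [x₁, x₂] = {(x₁, x₂), (x₂, x₁)} := by
      simp [Digraph'.cyclicArcs, List.rotate_cons_succ]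
    refine hψ (ψ x₁) ⟨[x₁, x₂], by simp [hx], by simp, ?_, ?_⟩
    · intro v hv
      simp only [List.mem_cons, List.not_mem_nil, or_false] at hv
      rcases hv with rfl | rfl
      · exact Finset.mem_filter.2 ⟨hx₁', rfl⟩
      · exact Finset.mem_filter.2 ⟨hx₂', heq.symm⟩
    · rw [hcy]
      intro p hp
      simp only [Finset.mem_insert, Finset.mem_singleton] at hp
      rcases hp with rfl | rfl
      · exact harc₁₂
      · exact harc₂₁
  set σ : V → Fin 2 := fun v => if v ∈ R then (if φ v = 0 then ψ x₁ else ψ x₂) else ψ v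
    with hσdef
  have hσcol : D.IsDicolouring 2 σ := by
    intro i
    rintro ⟨c, hnd, hlen, hmem, harcC⟩
    have hcne : c ≠ [] := by intro h; subst h; simp at hlen
    have hmem' : ∀ v ∈ c, v ∈ D.verts ∧ σ v = i := by
      intro v hv
      exact Finset.mem_filter.1 (hmem v hv)
    obtain ⟨x, hxor, hψxi, hxval⟩ : ∃ x, (x = x₁ ∨ x = x₂) ∧ ψ x = i ∧
        ∀ v, v ∈ R → σ v = i → (if φ v = 0 then x₁ else x₂) = x := by
      by_cases hi : ψ x₁ = i
      · refine ⟨x₁, Or.inl rfl, hi, ?_⟩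
        intro v hvR hσv
        simp only [hσdef, if_pos hvR] at hσv
        by_cases h0 : φ v = 0
        · simp [h0]
        · rw [if_neg h0] at hσv
          exact absurd (hσv.trans hi.symm).symm hψx
      · have hi2 : ψ x₂ = i := by
          have h1 : (ψ x₁).val ≠ i.val := fun h => hi (Fin.ext h)
          have h2 : (ψ x₁).val ≠ (ψ x₂).val := fun h => hψx (Fin.ext h)
          have w1 := (ψ x₁).isLt; have w2 := (ψ x₂).isLt; have w3 := i.isLt
          exact Fin.ext (by omega)
        refine ⟨x₂, Or.inr rfl, hi2, ?_⟩
        intro v hvR hσv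
        simp only [hσdef, if_pos hvR] at hσv
        by_cases h0 : φ v = 0
        · rw [if_pos h0] at hσv
          exact absurd (hσv.trans hi2.symm) hψx
        · simp [h0]
    have hxnotv : x ∉ D.verts := by rcases hxor with rfl | rfl; exacts [hx₁, hx₂]
    have hxverts' : x ∈ D'.verts := by rcases hxor with rfl | rfl; exacts [hx₁', hx₂']
    have hpair : ∀ p ∈ Digraph'.cyclicArcs c, p.1 ∈ c ∧ p.2 ∈ c ∧ p ∈ D.arcs := by
      intro p hp
      have hpD : p ∈ D.arcs := harcC hp
      rw [Digraph'.cyclicArcs, List.mem_toFinset] at hp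
      have hz := List.of_mem_zip (show (p.1, p.2) ∈ c.zip (c.rotate 1) from hp)
      exact ⟨hz.1, List.mem_rotate.1 hz.2, hpD⟩
    by_cases hall : ∀ v ∈ c, v ∈ R
    · -- the cycle lies in R : contradiction with hφ
      have harcR : Digraph'.cyclicArcs c ⊆ (D.induce R).arcs := by
        intro p hp
        obtain ⟨h1, h2, h3⟩ := hpair p hp
        simp only [Digraph'.induce, Finset.mem_filter]
        exact ⟨h3, hall _ h1, hall _ h2⟩
      rcases hxor with rfl | rfl
      · refine hφ 0 ⟨c, hnd, hlen, ?_, harcR⟩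
        intro v hv
        have hj : φ v = 0 := by
          by_contra h0
          have := hxval v (hall v hv) (hmem' v hv).2
          rw [if_neg h0] at this
          exact hx this.symm
        simp only [Digraph'.induce, Finset.mem_filter, Finset.mem_inter]
        exact ⟨⟨(hmem' v hv).1, hall v hv⟩, hj⟩
      · refine hφ 1 ⟨c, hnd, hlen, ?_, harcR⟩
        intro v hv
        have hj : φ v = 1 := by
          have h0 : φ v ≠ 0 := by
            intro h0
            have := hxval v (hall v hv) (hmem' v hv).2
            rw [if_pos h0] at this
            exact hx this
          have w1 := (φ v).isLt
          refine Fin.ext ?_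
          have : (φ v).val ≠ 0 := fun h => h0 (Fin.ext h)
          omega
        simp only [Digraph'.induce, Finset.mem_filter, Finset.mem_inter]
        exact ⟨⟨(hmem' v hv).1, hall v hv⟩, hj⟩
    · -- contract the cycle to a closed walk in D'
      set f : V → V := fun v => if v ∈ R then x else v with hf
      set w : List V := c.map f with hwdef
      have hwne : w ≠ [] := by
        rw [hwdef]
        simpa using hcne
      have harcmap : ∀ a b : V, a ∈ c → b ∈ c → (a, b) ∈ D.arcs →
          ((f a, f b) ∈ D'.arcs ∨ f a = f b) := by
        intro a b ha hb hab
        have habR : a ∈ R → (if φ a = 0 then x₁ else x₂) = x :=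
          fun h => hxval a h (hmem' a ha).2
        have hbbR : b ∈ R → (if φ b = 0 then x₁ else x₂) = x :=
          fun h => hxval b h (hmem' b hb).2
        by_cases haR : a ∈ R <;> by_cases hbR : b ∈ R
        · right; simp [hf, haR, hbR]
        · left
          have hfa : f a = x := by simp [hf, haR]
          have hfb : f b = b := by simp [hf, hbR]
          rw [hfa, hfb, harcs]
          refine Finset.mem_union_left _ (Finset.mem_union_right _ ?_)
          refine Finset.mem_image.2 ⟨(a, b), Finset.mem_filter.2 ⟨hab, haR, hbR⟩, ?_⟩
          simp only []
          rw [habR haR]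
        · left
          have hfa : f a = a := by simp [hf, haR]
          have hfb : f b = x := by simp [hf, hbR]
          rw [hfa, hfb, harcs]
          refine Finset.mem_union_right _ ?_
          refine Finset.mem_image.2 ⟨(a, b), Finset.mem_filter.2 ⟨hab, haR, hbR⟩, ?_⟩
          simp only []
          rw [hbbR hbR]
        · left
          have hfa : f a = a := by simp [hf, haR]
          have hfb : f b = b := by simp [hf, hbR]
          rw [hfa, hfb, harcs]
          exact Finset.mem_union_left _ (Finset.mem_union_left _ (Finset.mem_union_left _
            (Finset.mem_filter.2 ⟨hab, haR, hbR⟩)))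
      have hchW : w.IsChain (fun u v => (u, v) ∈ D'.arcs ∨ u = v) := by
        rw [hwdef, List.isChain_map, DigraphAux.chain'_iff_zip]
        intro p hp
        have hz := List.of_mem_zip (show (p.1, p.2) ∈ c.zip c.tail from hp)
        have harcp : (p.1, p.2) ∈ D.arcs := by
          apply harcC
          rw [Digraph'.cyclicArcs, List.mem_toFinset, DigraphAux.cyclic_zip c hcne]
          exact List.mem_append_left _ hp
        exact harcmap _ _ hz.1 (List.mem_of_mem_tail hz.2) harcp
      have hwrapW : ∀ a ∈ w.getLast?, ∀ b ∈ w.head?, (a, b) ∈ D'.arcs ∨ a = b := by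
        intro a ha b hb
        have hga : w.getLast? = some (f (c.getLast hcne)) := by
          rw [hwdef, List.getLast?_map, List.getLast?_eq_getLast hcne]; rfl
        have hha : w.head? = some (f (c.head hcne)) := by
          rw [hwdef, List.head?_map, List.head?_eq_head hcne]; rfl
        rw [hga] at ha
        rw [hha] at hb
        simp only [Option.mem_def, Option.some.injEq] at ha hb
        subst ha; subst hb
        have harcp : (c.getLast hcne, c.head hcne) ∈ D.arcs := by
          apply harcC
          rw [Digraph'.cyclicArcs, List.mem_toFinset, DigraphAux.cyclic_zip c hcne]
          exact List.mem_append_right _ (by simp)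
        exact harcmap _ _ (List.getLast_mem hcne) (List.head_mem hcne) harcp
      have hSW : ∀ v ∈ w, v ∈ D'.verts.filter (fun u => ψ u = i) := by
        intro v hv
        rw [hwdef] at hv
        obtain ⟨u, huc, rfl⟩ := List.mem_map.1 hv
        by_cases huR : u ∈ R
        · have : f u = x := by simp [hf, huR]
          rw [this]
          exact Finset.mem_filter.2 ⟨hxverts', hψxi⟩
        · have hfu : f u = u := by simp [hf, huR]
          rw [hfu]
          refine Finset.mem_filter.2 ⟨?_, ?_⟩
          · rw [hverts]
            exact Finset.mem_union_left _ (Finset.mem_sdiff.2 ⟨(hmem' u huc).1, huR⟩)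
          · have hσu := (hmem' u huc).2
            simpa only [hσdef, if_neg huR] using hσu
      have hcard : 2 ≤ w.toFinset.card := by
        push_neg at hall
        obtain ⟨v₀, hv₀c, hv₀R⟩ := hall
        by_cases hcr : ∃ u ∈ c, u ∈ R
        · obtain ⟨u, huc, huR⟩ := hcr
          have h1 : x ∈ w.toFinset := by
            rw [hwdef]
            exact List.mem_toFinset.2 (List.mem_map.2 ⟨u, huc, by simp [hf, huR]⟩)
          have h2 : v₀ ∈ w.toFinset := by
            rw [hwdef]
            exact List.mem_toFinset.2 (List.mem_map.2 ⟨v₀, hv₀c, by simp [hf, hv₀R]⟩)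
          have hxv : x ≠ v₀ := fun h => hxnotv (h ▸ (hmem' v₀ hv₀c).1)
          exact Finset.one_lt_card.2 ⟨x, h1, v₀, h2, hxv⟩
        · push_neg at hcr
          have hwc : w = c := by
            rw [hwdef]
            rw [List.map_congr_left (g := id) (fun a ha => by simp [hf, hcr a ha])]
            exact List.map_id c
          rw [hwc, List.toFinset_card_of_nodup hnd]
          exact hlen
      obtain ⟨c₁, hl₁, hS₁, hw₁⟩ := DigraphAux.deloop D'.arcs
        (D'.verts.filter fun u => ψ u = i) w.length w le_rfl hcard hSW hchW hwrapW
      obtain ⟨c₂, hnd₂, hl₂, hS₂, hw₂⟩ := DigraphAux.walk_to_cycle D'.arcs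
        (D'.verts.filter fun u => ψ u = i) (fun a ha => (D'.wf a ha).2.2)
        c₁.length c₁ le_rfl hl₁ hS₁ hw₁
      have hcne₂ : c₂ ≠ [] := by intro h; subst h; simp at hl₂
      exact hψ i ⟨c₂, hnd₂, hl₂, hS₂, (DigraphAux.cyclicArcs_subset_iff _ _ hcne₂).2 hw₂⟩
  have hD2 : D.dichromatic ≤ 2 := Nat.sInf_le ⟨σ, hσcol⟩
  omega
end

section
/- Let k ≥ 2 and let D₁ and D₂ be k-dicritical oriented graphs on disjoint vertex sets. Then △(1, D₁, D₂) is (k+1)-dicritical, where △(1, D₁, D₂) is obtained from the disjoint union of D₁ and D₂ by adding a new vertex u₀ together with all arcs from u₀ to V(D₁), all arcs from V(D₁) to V(D₂), and all arcs from V(D₂) to u₀. -/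
namespace Digraph'

variable {V : Type*} [DecidableEq V]

/-! ### Auxiliary lemmas -/

lemma mem_of_mem_cyclicArcs_s18 {c : List V} {p : V × V} (h : p ∈ cyclicArcs c) :
    p.1 ∈ c ∧ p.2 ∈ c := by
  rw [cyclicArcs, List.mem_toFinset] at h
  obtain ⟨h1, h2⟩ := List.of_mem_zip (a := p.1) (b := p.2) (by simpa using h)
  exact ⟨h1, List.mem_rotate.mp h2⟩

lemma pair_mem_cyclicArcs {c : List V} {i : ℕ} (hi : i < c.length) :
    (c.get ⟨i, hi⟩, c.get ⟨(i + 1) % c.length, Nat.mod_lt _ (by omega)⟩) ∈ cyclicArcs c := by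
  rw [cyclicArcs, List.mem_toFinset]
  have hz : i < (c.zip (c.rotate 1)).length := by
    simp [List.length_zip]; omega
  have e : (c.zip (c.rotate 1)).get ⟨i, hz⟩
      = (c.get ⟨i, hi⟩, c.get ⟨(i + 1) % c.length, Nat.mod_lt _ (by omega)⟩) := by
    rw [List.get_eq_getElem, List.getElem_zip]
    congr 1
    rw [List.get_eq_getElem, List.getElem_rotate]
  rw [← e]
  exact List.get_mem _ _

lemma exists_succ_arc {c : List V} {v : V} (h : v ∈ c) :
    ∃ y ∈ c, (v, y) ∈ cyclicArcs c := by
  obtain ⟨i, hi, rfl⟩ := List.mem_iff_get.mp h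
  exact ⟨_, List.get_mem _ _, pair_mem_cyclicArcs i.isLt⟩

lemma exists_pred_arc {c : List V} {v : V} (h : v ∈ c) :
    ∃ x ∈ c, (x, v) ∈ cyclicArcs c := by
  have h' : v ∈ c.rotate 1 := List.mem_rotate.mpr h
  obtain ⟨i, hi, rfl⟩ := List.mem_iff_get.mp h'
  have hi2 : (i : ℕ) < c.length := by have := i.isLt; simpa using this
  have e : (c.rotate 1).get i = c.get ⟨((i : ℕ) + 1) % c.length, Nat.mod_lt _ (by omega)⟩ := by
    rw [List.get_eq_getElem, List.get_eq_getElem, List.getElem_rotate]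
  rw [e]
  exact ⟨_, List.get_mem _ _, pair_mem_cyclicArcs hi2⟩

lemma cyclic_propagate {c : List V} {A : Set V}
    (h : ∀ p ∈ cyclicArcs c, p.1 ∈ A → p.2 ∈ A) {v : V} (hv : v ∈ c) (hvA : v ∈ A) :
    ∀ w ∈ c, w ∈ A := by
  obtain ⟨i, hi, rfl⟩ := List.mem_iff_get.mp hv
  have hn : 0 < c.length := by have := i.isLt; omega
  have key : ∀ t, c.get ⟨((i : ℕ) + t) % c.length, Nat.mod_lt _ hn⟩ ∈ A := by
    intro t
    induction t with
    | zero =>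
      have e : (⟨((i : ℕ) + 0) % c.length, Nat.mod_lt _ hn⟩ : Fin c.length) = ⟨(i : ℕ), i.isLt⟩ := by
        apply Fin.ext
        show ((i : ℕ) + 0) % c.length = (i : ℕ)
        rw [Nat.add_zero, Nat.mod_eq_of_lt i.isLt]
      rw [e]
      simpa using hvA
    | succ t ih =>
      have harc := pair_mem_cyclicArcs (c := c) (i := ((i : ℕ) + t) % c.length) (Nat.mod_lt _ hn)
      have h2 := h _ harc ih
      have e : (⟨(((i : ℕ) + t) % c.length + 1) % c.length, Nat.mod_lt _ hn⟩ : Fin c.length)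
          = ⟨((i : ℕ) + (t + 1)) % c.length, Nat.mod_lt _ hn⟩ := by
        apply Fin.ext
        show (((i : ℕ) + t) % c.length + 1) % c.length = ((i : ℕ) + (t + 1)) % c.length
        rw [Nat.mod_add_mod, Nat.add_assoc]
      rw [e] at h2
      exact h2
  intro w hw
  obtain ⟨j, hj, rfl⟩ := List.mem_iff_get.mp hw
  have hk := key (c.length + (j : ℕ) - (i : ℕ))
  have e : (⟨((i : ℕ) + (c.length + (j : ℕ) - (i : ℕ))) % c.length, Nat.mod_lt _ hn⟩ : Fin c.length)
      = ⟨(j : ℕ), j.isLt⟩ := by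
    apply Fin.ext
    show ((i : ℕ) + (c.length + (j : ℕ) - (i : ℕ))) % c.length = (j : ℕ)
    have h1 := i.isLt; have h2 := j.isLt
    rw [show (i : ℕ) + (c.length + (j : ℕ) - (i : ℕ)) = (j : ℕ) + 1 * c.length by omega]
    rw [Nat.add_mul_mod_self_right, Nat.mod_eq_of_lt j.isLt]
  rw [e] at hk
  simpa using hk


lemma two_le_card_of_cycle {c : List V} {S : Finset V} (hnd : c.Nodup)
    (hlen : 2 ≤ c.length) (hmem : ∀ v ∈ c, v ∈ S) : 1 < S.card := by
  match c, hnd, hlen, hmem with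
  | x :: y :: t, hnd, _, hmem =>
    have hxy : x ≠ y := by
      rw [List.nodup_cons] at hnd
      intro h; exact hnd.1 (h ▸ List.mem_cons_self)
    exact Finset.one_lt_card.mpr ⟨x, hmem x (by simp), y, hmem y (by simp), hxy⟩

lemma acyclicOn_of_card_le_one {D : Digraph' V} {S : Finset V} (hS : S.card ≤ 1) :
    D.AcyclicOn S := by
  rintro ⟨c, hnd, hlen, hmem, -⟩
  have := two_le_card_of_cycle hnd hlen hmem
  omega

lemma relabel {D : Digraph' V} {j k : ℕ} {φ : V → Fin j} (h : D.IsDicolouring j φ)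
    (g : V → Fin k) (hg : ∀ v ∈ D.verts, ∀ w ∈ D.verts, g v = g w → φ v = φ w) :
    D.IsDicolouring k g := by
  intro i
  rintro ⟨c, hnd, hlen, hmem, harc⟩
  obtain ⟨v₀, hv₀⟩ := List.exists_mem_of_ne_nil c (by intro h'; subst h'; simp at hlen)
  have hv₀' := hmem v₀ hv₀
  rw [Finset.mem_filter] at hv₀'
  refine h (φ v₀) ⟨c, hnd, hlen, ?_, harc⟩
  intro v hv
  have hv' := hmem v hv
  rw [Finset.mem_filter] at hv' ⊢
  exact ⟨hv'.1, hg v hv'.1 v₀ hv₀'.1 (hv'.2.trans hv₀'.2.symm)⟩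

lemma IsDicolouring.of_subdigraph {H D : Digraph' V} {k : ℕ} {φ : V → Fin k}
    (hsub : H.IsSubdigraph D) (h : D.IsDicolouring k φ) : H.IsDicolouring k φ := by
  intro i
  rintro ⟨c, hnd, hlen, hmem, harc⟩
  refine h i ⟨c, hnd, hlen, fun v hv => ?_, fun b hb => hsub.2 (harc hb)⟩
  have hv' := hmem v hv
  rw [Finset.mem_filter] at hv' ⊢
  exact ⟨hsub.1 hv'.1, hv'.2⟩

lemma dicolourable_succ_n (D : Digraph' V) : D.Dicolourable (D.n + 1) := by
  classical
  let e := D.verts.equivFin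
  refine ⟨fun v => if h : v ∈ D.verts then (e ⟨v, h⟩).castSucc else 0, fun i => ?_⟩
  apply acyclicOn_of_card_le_one
  rw [Finset.card_le_one]
  intro a ha b hb
  rw [Finset.mem_filter] at ha hb
  obtain ⟨ha1, ha2⟩ := ha
  obtain ⟨hb1, hb2⟩ := hb
  dsimp only at ha2 hb2
  have ha2 := (dif_pos ha1).symm.trans ha2
  have hb2 := (dif_pos hb1).symm.trans hb2
  have : e ⟨a, ha1⟩ = e ⟨b, hb1⟩ := Fin.castSucc_injective _ (ha2.trans hb2.symm)
  have := e.injective this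
  exact congrArg Subtype.val this

lemma dicolourable_dichromatic (D : Digraph' V) : D.Dicolourable D.dichromatic :=
  Nat.sInf_mem (⟨_, dicolourable_succ_n D⟩ : Set.Nonempty {k | D.Dicolourable k})

lemma dichromatic_le {D : Digraph' V} {k : ℕ} (h : D.Dicolourable k) :
    D.dichromatic ≤ k := Nat.sInf_le h

lemma Dicolourable.mono {D : Digraph' V} {j k : ℕ} (hjk : j ≤ k)
    (h : D.Dicolourable j) : D.Dicolourable k := by
  obtain ⟨φ, hφ⟩ := h
  exact ⟨fun v => Fin.castLE hjk (φ v), relabel hφ _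
    (fun v _ w _ hvw => Fin.castLE_injective hjk hvw)⟩

lemma dicolourable_of_dichromatic_le {D : Digraph' V} {k : ℕ}
    (h : D.dichromatic ≤ k) : D.Dicolourable k :=
  (dicolourable_dichromatic D).mono h

lemma dicolourable_of_missing_colour {D : Digraph' V} {m : ℕ} (hm : 1 ≤ m)
    {φ : V → Fin (m + 1)} (h : D.IsDicolouring (m + 1) φ) {i : Fin (m + 1)}
    (hi : ∀ v ∈ D.verts, φ v ≠ i) : D.Dicolourable m := by
  refine ⟨fun v => if h' : (φ v : ℕ) < (i : ℕ) then ⟨φ v, by have := i.isLt; omega⟩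
    else ⟨(φ v : ℕ) - 1, by have := (φ v).isLt; omega⟩, relabel h _ ?_⟩
  intro v hv w hw hvw
  have h1' : (φ v : ℕ) ≠ (i : ℕ) := fun e => hi v hv (Fin.ext e)
  have h2' : (φ w : ℕ) ≠ (i : ℕ) := fun e => hi w hw (Fin.ext e)
  apply Fin.ext
  by_cases c1 : (φ v : ℕ) < (i : ℕ) <;> by_cases c2 : (φ w : ℕ) < (i : ℕ) <;>
    simp only [c1, c2, dif_pos, dif_neg, not_false_iff, Fin.mk.injEq] at hvw <;>
    omega


/-- Characterisation of the arcs of the triangle join (hypothesis form). -/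
def ArcIff (D₁ D₂ D : Digraph' V) (u₀ : V) : Prop :=
  ∀ p : V × V, p ∈ D.arcs ↔ p ∈ D₁.arcs ∨ p ∈ D₂.arcs ∨ (p.1 = u₀ ∧ p.2 ∈ D₁.verts) ∨
    (p.1 ∈ D₁.verts ∧ p.2 ∈ D₂.verts) ∨ (p.1 ∈ D₂.verts ∧ p.2 = u₀)

lemma side_split {D₁ D₂ D : Digraph' V} {u₀ : V}
    (hdisj : Disjoint D₁.verts D₂.verts) (hu₁ : u₀ ∉ D₁.verts) (hu₂ : u₀ ∉ D₂.verts)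
    (hai : ArcIff D₁ D₂ D u₀)
    {c : List V} (hsub : ∀ p ∈ cyclicArcs c, p ∈ D.arcs)
    (hmem : ∀ v ∈ c, v ∈ D₁.verts ∨ v ∈ D₂.verts) :
    ((∀ v ∈ c, v ∈ D₁.verts) ∧ ∀ p ∈ cyclicArcs c, p ∈ D₁.arcs) ∨
    ((∀ v ∈ c, v ∈ D₂.verts) ∧ ∀ p ∈ cyclicArcs c, p ∈ D₂.arcs) := by
  have hd12 : ∀ v ∈ D₁.verts, v ∉ D₂.verts := fun v hv => Finset.disjoint_left.mp hdisj hv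
  have hd21 : ∀ v ∈ D₂.verts, v ∉ D₁.verts := fun v hv hv1 => hd12 v hv1 hv
  by_cases h2 : ∃ v ∈ c, v ∈ D₂.verts
  · right
    obtain ⟨v, hv, hv2⟩ := h2
    have hall : ∀ w ∈ c, w ∈ D₂.verts := by
      have := cyclic_propagate (A := {x | x ∈ D₂.verts}) ?_ hv hv2
      · exact this
      · intro p hp hp1
        have hpD := (hai p).mp (hsub p hp)
        have hm2 := mem_of_mem_cyclicArcs_s18 hp
        simp only [Set.mem_setOf_eq] at hp1 ⊢
        rcases hpD with h | h | ⟨h1, h2'⟩ | ⟨h1, h2'⟩ | ⟨h1, h2'⟩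
        · exact absurd hp1 (hd12 p.1 (D₁.wf p h).1)
        · exact (D₂.wf p h).2.1
        · rw [h1] at hp1; exact absurd hp1 hu₂
        · exact absurd hp1 (hd12 p.1 h1)
        · rcases hmem p.2 hm2.2 with h | h
          · rw [h2'] at h; exact absurd h hu₁
          · exact h
    refine ⟨hall, fun p hp => ?_⟩
    have hpD := (hai p).mp (hsub p hp)
    have hm2 := mem_of_mem_cyclicArcs_s18 hp
    have hp1 : p.1 ∈ D₂.verts := hall p.1 hm2.1
    have hp2 : p.2 ∈ D₂.verts := hall p.2 hm2.2
    rcases hpD with h | h | ⟨h1, h2'⟩ | ⟨h1, h2'⟩ | ⟨h1, h2'⟩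
    · exact absurd hp1 (hd12 p.1 (D₁.wf p h).1)
    · exact h
    · rw [h1] at hp1; exact absurd hp1 hu₂
    · exact absurd hp1 (hd12 p.1 h1)
    · rw [h2'] at hp2; exact absurd hp2 hu₂
  · left
    push_neg at h2
    have hall : ∀ w ∈ c, w ∈ D₁.verts := by
      intro w hw
      rcases hmem w hw with h | h
      · exact h
      · exact absurd h (h2 w hw)
    refine ⟨hall, fun p hp => ?_⟩
    have hpD := (hai p).mp (hsub p hp)
    have hm2 := mem_of_mem_cyclicArcs_s18 hp
    have hp1 : p.1 ∈ D₁.verts := hall p.1 hm2.1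
    have hp2 : p.2 ∈ D₁.verts := hall p.2 hm2.2
    rcases hpD with h | h | ⟨h1, h2'⟩ | ⟨h1, h2'⟩ | ⟨h1, h2'⟩
    · exact h
    · exact absurd (D₂.wf p h).1 (hd12 p.1 hp1)
    · rw [h1] at hp1; exact absurd hp1 hu₁
    · exact absurd h2' (hd12 p.2 hp2)
    · rw [h2'] at hp2; exact absurd hp2 hu₁

lemma out_of_u0 {D₁ D₂ D : Digraph' V} {u₀ : V}
    (hu₁ : u₀ ∉ D₁.verts) (hu₂ : u₀ ∉ D₂.verts)
    (hai : ArcIff D₁ D₂ D u₀)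
    {c : List V} (hsub : ∀ p ∈ cyclicArcs c, p ∈ D.arcs) (hu0c : u₀ ∈ c) :
    ∃ y ∈ c, y ∈ D₁.verts ∧ (u₀, y) ∈ cyclicArcs c := by
  obtain ⟨y, hyc, hyarc⟩ := exists_succ_arc hu0c
  have hyD := hsub _ hyarc
  have hne := (D.wf _ hyD).2.2
  rcases (hai (u₀, y)).mp hyD with h | h | ⟨h1, h2⟩ | ⟨h1, h2⟩ | ⟨h1, h2⟩
  · exact absurd (D₁.wf _ h).1 hu₁
  · exact absurd (D₂.wf _ h).1 hu₂
  · exact ⟨y, hyc, h2, hyarc⟩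
  · exact absurd h1 hu₁
  · exact absurd h2.symm hne

lemma in_to_u0 {D₁ D₂ D : Digraph' V} {u₀ : V}
    (hu₁ : u₀ ∉ D₁.verts) (hu₂ : u₀ ∉ D₂.verts)
    (hai : ArcIff D₁ D₂ D u₀)
    {c : List V} (hsub : ∀ p ∈ cyclicArcs c, p ∈ D.arcs) (hu0c : u₀ ∈ c) :
    ∃ x ∈ c, x ∈ D₂.verts ∧ (x, u₀) ∈ cyclicArcs c := by
  obtain ⟨x, hxc, hxarc⟩ := exists_pred_arc hu0c
  have hxD := hsub _ hxarc
  have hne := (D.wf _ hxD).2.2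
  rcases (hai (x, u₀)).mp hxD with h | h | ⟨h1, h2⟩ | ⟨h1, h2⟩ | ⟨h1, h2⟩
  · exact absurd (D₁.wf _ h).2.1 hu₁
  · exact absurd (D₂.wf _ h).2.1 hu₂
  · exact absurd h1 hne
  · exact absurd h2 hu₂
  · exact ⟨x, hxc, h1, hxarc⟩

end Digraph'

open Digraph' in
/-- Let `k ≥ 2` and let `D₁`, `D₂` be `k`-dicritical oriented
graphs on disjoint vertex sets. The digraph `△(1, D₁, D₂)`, obtained from the
disjoint union of `D₁` and `D₂` by adding a new vertex `u₀`, all arcs from `u₀`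
to `V(D₁)`, all arcs from `V(D₁)` to `V(D₂)` and all arcs from `V(D₂)` to `u₀`,
is `(k+1)`-dicritical. -/
theorem triangle_join_dicritical {V : Type*} [DecidableEq V]
    (k : ℕ) (hk : 2 ≤ k) (D₁ D₂ D : Digraph' V) (u₀ : V)
    (h₁ : Digraph'.Dicritical k D₁) (ho₁ : D₁.Oriented)
    (h₂ : Digraph'.Dicritical k D₂) (ho₂ : D₂.Oriented)
    (hdisj : Disjoint D₁.verts D₂.verts)
    (hu₁ : u₀ ∉ D₁.verts) (hu₂ : u₀ ∉ D₂.verts)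
    (hverts : D.verts = insert u₀ (D₁.verts ∪ D₂.verts))
    (harcs : D.arcs = D₁.arcs ∪ D₂.arcs ∪
      D₁.verts.image (fun v => (u₀, v)) ∪ (D₁.verts ×ˢ D₂.verts) ∪
      D₂.verts.image (fun v => (v, u₀))) :
    Digraph'.Dicritical (k + 1) D := by
  classical
  obtain ⟨m, rfl⟩ : ∃ m, k = m + 1 := ⟨k - 1, by omega⟩
  have hm : 1 ≤ m := by omega
  have hd12 : ∀ v ∈ D₁.verts, v ∉ D₂.verts := fun v hv => Finset.disjoint_left.mp hdisj hv
  have hd21 : ∀ v ∈ D₂.verts, v ∉ D₁.verts := fun v hv hv1 => hd12 v hv1 hv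
  have hai : ArcIff D₁ D₂ D u₀ := by
    rintro ⟨x, y⟩
    rw [harcs]
    simp only [Finset.mem_union, Finset.mem_image, Finset.mem_product, Prod.mk.injEq,
      Prod.ext_iff]
    constructor
    · rintro ((((h | h) | ⟨v, hv, h1, h2⟩) | h) | ⟨v, hv, h1, h2⟩)
      · exact Or.inl h
      · exact Or.inr (Or.inl h)
      · exact Or.inr (Or.inr (Or.inl ⟨h1.symm, h2 ▸ hv⟩))
      · exact Or.inr (Or.inr (Or.inr (Or.inl h)))
      · exact Or.inr (Or.inr (Or.inr (Or.inr ⟨h1 ▸ hv, h2.symm⟩)))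
    · rintro (h | h | ⟨h1, h2⟩ | h | ⟨h1, h2⟩)
      · exact Or.inl (Or.inl (Or.inl (Or.inl h)))
      · exact Or.inl (Or.inl (Or.inl (Or.inr h)))
      · exact Or.inl (Or.inl (Or.inr ⟨y, h2, h1.symm, rfl⟩))
      · exact Or.inl (Or.inr h)
      · exact Or.inr ⟨x, h1, rfl, h2.symm⟩
  have hverts' : ∀ v, v ∈ D.verts ↔ v = u₀ ∨ v ∈ D₁.verts ∨ v ∈ D₂.verts := by
    intro v; rw [hverts]; simp [Finset.mem_insert, Finset.mem_union, or_assoc]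
  have hne₁ : D₁.verts.Nonempty := by
    by_contra h
    rw [Finset.not_nonempty_iff_eq_empty] at h
    have h1 : D₁.Dicolourable 1 :=
      ⟨fun _ => 0, fun i => acyclicOn_of_card_le_one (by rw [h]; simp)⟩
    have := dichromatic_le h1
    rw [h₁.1] at this
    omega
  have hne₂ : D₂.verts.Nonempty := by
    by_contra h
    rw [Finset.not_nonempty_iff_eq_empty] at h
    have h1 : D₂.Dicolourable 1 :=
      ⟨fun _ => 0, fun i => acyclicOn_of_card_le_one (by rw [h]; simp)⟩
    have := dichromatic_le h1
    rw [h₂.1] at this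
    omega
  have hsub₁ : D₁.IsSubdigraph D :=
    ⟨fun v hv => (hverts' v).mpr (Or.inr (Or.inl hv)),
     fun p hp => (hai p).mpr (Or.inl hp)⟩
  have hsub₂ : D₂.IsSubdigraph D :=
    ⟨fun v hv => (hverts' v).mpr (Or.inr (Or.inr hv)),
     fun p hp => (hai p).mpr (Or.inr (Or.inl hp))⟩
  obtain ⟨ψ₁, hψ₁⟩ := dicolourable_of_dichromatic_le (le_of_eq h₁.1)
  obtain ⟨ψ₂, hψ₂⟩ := dicolourable_of_dichromatic_le (le_of_eq h₂.1)
  -- Upper bound: a (k+1)-dicolouring of D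
  have hub : D.Dicolourable (m + 1 + 1) := by
    refine ⟨fun v => if v ∈ D₁.verts then (ψ₁ v).castSucc else
      if v ∈ D₂.verts then (ψ₂ v).castSucc else Fin.last (m + 1), fun i => ?_⟩
    rintro ⟨c, hnd, hlen, hmem, harcsub⟩
    have hmem' : ∀ v ∈ c, v ∈ D.verts ∧
        (if v ∈ D₁.verts then (ψ₁ v).castSucc else
          if v ∈ D₂.verts then (ψ₂ v).castSucc else Fin.last (m + 1)) = i := by
      intro v hv
      have := hmem v hv
      rw [Finset.mem_filter] at this
      exact this
    have hsubD : ∀ p ∈ cyclicArcs c, p ∈ D.arcs := fun p hp => harcsub hp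
    have hu0c : u₀ ∉ c := by
      intro hu0c
      obtain ⟨y, hyc, hy1, hyarc⟩ := out_of_u0 hu₁ hu₂ hai hsubD hu0c
      have e1 := (hmem' u₀ hu0c).2
      have e2 := (hmem' y hyc).2
      rw [if_neg hu₁, if_neg hu₂] at e1
      rw [if_pos hy1] at e2
      have : (ψ₁ y).castSucc = Fin.last (m + 1) := e2.trans e1.symm
      exact absurd this (Fin.ne_of_lt (Fin.castSucc_lt_last _))
    have hmem'' : ∀ v ∈ c, v ∈ D₁.verts ∨ v ∈ D₂.verts := by
      intro v hv
      rcases (hverts' v).mp (hmem' v hv).1 with rfl | h | h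
      · exact absurd hv hu0c
      · exact Or.inl h
      · exact Or.inr h
    obtain ⟨v₀, hv₀⟩ := List.exists_mem_of_ne_nil c (by intro h'; subst h'; simp at hlen)
    rcases side_split hdisj hu₁ hu₂ hai hsubD hmem'' with ⟨hvs, has⟩ | ⟨hvs, has⟩
    · refine hψ₁ (ψ₁ v₀) ⟨c, hnd, hlen, fun v hv => ?_, fun p hp => has p hp⟩
      rw [Finset.mem_filter]
      refine ⟨hvs v hv, ?_⟩
      apply Fin.castSucc_injective
      have e1 := (hmem' v hv).2
      have e2 := (hmem' v₀ hv₀).2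
      rw [if_pos (hvs v hv)] at e1
      rw [if_pos (hvs v₀ hv₀)] at e2
      exact e1.trans e2.symm
    · refine hψ₂ (ψ₂ v₀) ⟨c, hnd, hlen, fun v hv => ?_, fun p hp => has p hp⟩
      rw [Finset.mem_filter]
      refine ⟨hvs v hv, ?_⟩
      apply Fin.castSucc_injective
      have e1 := (hmem' v hv).2
      have e2 := (hmem' v₀ hv₀).2
      rw [if_neg (hd21 v (hvs v hv)), if_pos (hvs v hv)] at e1
      rw [if_neg (hd21 v₀ (hvs v₀ hv₀)), if_pos (hvs v₀ hv₀)] at e2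
      exact e1.trans e2.symm
  -- Lower bound
  have hlb : ¬ D.Dicolourable (m + 1) := by
    rintro ⟨φ, hφ⟩
    have hres₁ : D₁.IsDicolouring (m + 1) φ := IsDicolouring.of_subdigraph hsub₁ hφ
    have hres₂ : D₂.IsDicolouring (m + 1) φ := IsDicolouring.of_subdigraph hsub₂ hφ
    have husage₁ : ∀ i, ∃ v ∈ D₁.verts, φ v = i := by
      intro i; by_contra hco
      push_neg at hco
      have := dichromatic_le (dicolourable_of_missing_colour hm hres₁ hco)
      rw [h₁.1] at this; omega
    have husage₂ : ∀ i, ∃ v ∈ D₂.verts, φ v = i := by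
      intro i; by_contra hco
      push_neg at hco
      have := dichromatic_le (dicolourable_of_missing_colour hm hres₂ hco)
      rw [h₂.1] at this; omega
    obtain ⟨v₁, hv₁, hc₁⟩ := husage₁ (φ u₀)
    obtain ⟨v₂, hv₂, hc₂⟩ := husage₂ (φ u₀)
    have hne01 : u₀ ≠ v₁ := fun h => hu₁ (h ▸ hv₁)
    have hne02 : u₀ ≠ v₂ := fun h => hu₂ (h ▸ hv₂)
    have hne12 : v₁ ≠ v₂ := fun h => hd12 v₁ hv₁ (h ▸ hv₂)
    apply hφ (φ u₀)
    refine ⟨[u₀, v₁, v₂], by simp [hne01, hne02, hne12], by simp, ?_, ?_⟩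
    · intro v hv
      rw [Finset.mem_filter]
      simp only [List.mem_cons, List.mem_singleton, List.not_mem_nil, or_false] at hv
      rcases hv with rfl | rfl | rfl
      · exact ⟨(hverts' v).mpr (Or.inl rfl), rfl⟩
      · exact ⟨(hverts' v).mpr (Or.inr (Or.inl hv₁)), hc₁⟩
      · exact ⟨(hverts' v).mpr (Or.inr (Or.inr hv₂)), hc₂⟩
    · have hrot : ([u₀, v₁, v₂].rotate 1) = [v₁, v₂, u₀] := by
        simp [List.rotate]
      intro p hp
      rw [cyclicArcs, hrot, List.mem_toFinset] at hp
      simp only [List.zip, List.zipWith, List.mem_cons, List.not_mem_nil, or_false] at hp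
      rcases hp with rfl | rfl | rfl
      · exact (hai _).mpr (Or.inr (Or.inr (Or.inl ⟨rfl, hv₁⟩)))
      · exact (hai _).mpr (Or.inr (Or.inr (Or.inr (Or.inl ⟨hv₁, hv₂⟩))))
      · exact (hai _).mpr (Or.inr (Or.inr (Or.inr (Or.inr ⟨hv₂, rfl⟩))))
  have hdich : D.dichromatic = m + 1 + 1 := by
    apply le_antisymm (dichromatic_le hub)
    by_contra hco
    push_neg at hco
    exact hlb (dicolourable_of_dichromatic_le (by omega))
  refine ⟨hdich, ?_⟩
  rintro H ⟨⟨hHv, hHa⟩, hne⟩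
  have hmiss : ∃ a ∈ D.arcs, a ∉ H.arcs := by
    by_contra hco
    push_neg at hco
    have heq : H.arcs = D.arcs := Finset.Subset.antisymm hHa hco
    have hveq : H.verts = D.verts := by
      apply Finset.Subset.antisymm hHv
      intro v hv
      rcases (hverts' v).mp hv with rfl | h | h
      · obtain ⟨w, hw⟩ := hne₁
        have harc : (v, w) ∈ H.arcs := by
          rw [heq]; exact (hai _).mpr (Or.inr (Or.inr (Or.inl ⟨rfl, hw⟩)))
        exact (H.wf _ harc).1
      · have harc : (u₀, v) ∈ H.arcs := by
          rw [heq]; exact (hai _).mpr (Or.inr (Or.inr (Or.inl ⟨rfl, h⟩)))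
        exact (H.wf _ harc).2.1
      · have harc : (v, u₀) ∈ H.arcs := by
          rw [heq]; exact (hai _).mpr (Or.inr (Or.inr (Or.inr (Or.inr ⟨h, rfl⟩))))
        exact (H.wf _ harc).1
    rcases hne with h' | h'
    · exact h' hveq
    · exact h' heq
  obtain ⟨a, haD, haH⟩ := hmiss
  have hHsub : H.IsSubdigraph (D.eraseArc a) :=
    ⟨hHv, fun b hb => Finset.mem_erase.mpr ⟨fun e => haH (e ▸ hb), hHa hb⟩⟩
  suffices hsuf : (D.eraseArc a).Dicolourable (m + 1) by
    obtain ⟨φ, hφ⟩ := hsuf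
    have hd : H.Dicolourable (m + 1) := ⟨φ, IsDicolouring.of_subdigraph hHsub hφ⟩
    have := dichromatic_le hd
    omega
  obtain ⟨x, y⟩ := a
  have haE : ∀ (c : List V), cyclicArcs c ⊆ (D.eraseArc (x, y)).arcs →
      (∀ p ∈ cyclicArcs c, p ∈ D.arcs.erase (x, y)) ∧ (∀ p ∈ cyclicArcs c, p ∈ D.arcs) :=
    fun c hs => ⟨fun p hp => hs hp, fun p hp => Finset.mem_of_mem_erase (hs hp)⟩
  rcases (hai (x, y)).mp haD with hc | hc | ⟨he1, hy⟩ | ⟨hx, hy⟩ | ⟨hx, he2⟩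
  · -- Case 1 : the arc lies inside D₁
    have hprop : (D₁.eraseArc (x, y)).IsProperSubdigraph D₁ := by
      refine ⟨⟨subset_rfl, Finset.erase_subset _ _⟩, Or.inr fun he => ?_⟩
      have h2 : (x, y) ∈ (D₁.eraseArc (x, y)).arcs := by rw [he]; exact hc
      exact (Finset.mem_erase.mp h2).1 rfl
    obtain ⟨α, hα⟩ := dicolourable_of_dichromatic_le
      (show (D₁.eraseArc (x, y)).dichromatic ≤ m by
        have := h₁.2 _ hprop; simpa using this)
    refine ⟨fun v => if v ∈ D₁.verts then (α v).castSucc else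
      if v ∈ D₂.verts then ψ₂ v else Fin.last m, fun i => ?_⟩
    rintro ⟨c, hnd, hlen, hmem, harcsub⟩
    obtain ⟨hsubE, hsubD⟩ := haE c harcsub
    have hmem' : ∀ v ∈ c, v ∈ D.verts ∧
        (if v ∈ D₁.verts then (α v).castSucc else
          if v ∈ D₂.verts then ψ₂ v else Fin.last m) = i :=
      fun v hv => Finset.mem_filter.mp (hmem v hv)
    have hu0c : u₀ ∉ c := by
      intro hu0c
      obtain ⟨w, hwc, hw1, hwarc⟩ := out_of_u0 hu₁ hu₂ hai hsubD hu0c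
      have e1 := (hmem' u₀ hu0c).2
      have e2 := (hmem' w hwc).2
      rw [if_neg hu₁, if_neg hu₂] at e1
      rw [if_pos hw1] at e2
      exact absurd (e2.trans e1.symm) (Fin.ne_of_lt (Fin.castSucc_lt_last _))
    have hmem'' : ∀ v ∈ c, v ∈ D₁.verts ∨ v ∈ D₂.verts := by
      intro v hv
      rcases (hverts' v).mp (hmem' v hv).1 with rfl | h | h
      · exact absurd hv hu0c
      · exact Or.inl h
      · exact Or.inr h
    obtain ⟨v₀, hv₀⟩ := List.exists_mem_of_ne_nil c (by intro h'; subst h'; simp at hlen)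
    rcases side_split hdisj hu₁ hu₂ hai hsubD hmem'' with ⟨hvs, has⟩ | ⟨hvs, has⟩
    · refine hα (α v₀) ⟨c, hnd, hlen, fun v hv => ?_, fun p hp => ?_⟩
      · rw [Finset.mem_filter]
        refine ⟨hvs v hv, ?_⟩
        apply Fin.castSucc_injective
        have e1 := (hmem' v hv).2
        have e2 := (hmem' v₀ hv₀).2
        rw [if_pos (hvs v hv)] at e1
        rw [if_pos (hvs v₀ hv₀)] at e2
        exact e1.trans e2.symm
      · exact Finset.mem_erase.mpr
          ⟨(Finset.mem_erase.mp (hsubE p hp)).1, has p hp⟩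
    · refine hψ₂ (ψ₂ v₀) ⟨c, hnd, hlen, fun v hv => ?_, fun p hp => has p hp⟩
      rw [Finset.mem_filter]
      refine ⟨hvs v hv, ?_⟩
      have e1 := (hmem' v hv).2
      have e2 := (hmem' v₀ hv₀).2
      rw [if_neg (hd21 v (hvs v hv)), if_pos (hvs v hv)] at e1
      rw [if_neg (hd21 v₀ (hvs v₀ hv₀)), if_pos (hvs v₀ hv₀)] at e2
      exact e1.trans e2.symm
  · -- Case 2 : the arc lies inside D₂
    have hprop : (D₂.eraseArc (x, y)).IsProperSubdigraph D₂ := by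
      refine ⟨⟨subset_rfl, Finset.erase_subset _ _⟩, Or.inr fun he => ?_⟩
      have h2 : (x, y) ∈ (D₂.eraseArc (x, y)).arcs := by rw [he]; exact hc
      exact (Finset.mem_erase.mp h2).1 rfl
    obtain ⟨α, hα⟩ := dicolourable_of_dichromatic_le
      (show (D₂.eraseArc (x, y)).dichromatic ≤ m by
        have := h₂.2 _ hprop; simpa using this)
    refine ⟨fun v => if v ∈ D₂.verts then (α v).castSucc else
      if v ∈ D₁.verts then ψ₁ v else Fin.last m, fun i => ?_⟩
    rintro ⟨c, hnd, hlen, hmem, harcsub⟩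
    obtain ⟨hsubE, hsubD⟩ := haE c harcsub
    have hmem' : ∀ v ∈ c, v ∈ D.verts ∧
        (if v ∈ D₂.verts then (α v).castSucc else
          if v ∈ D₁.verts then ψ₁ v else Fin.last m) = i :=
      fun v hv => Finset.mem_filter.mp (hmem v hv)
    have hu0c : u₀ ∉ c := by
      intro hu0c
      obtain ⟨w, hwc, hw2, hwarc⟩ := in_to_u0 hu₁ hu₂ hai hsubD hu0c
      have e1 := (hmem' u₀ hu0c).2
      have e2 := (hmem' w hwc).2
      rw [if_neg hu₂, if_neg hu₁] at e1
      rw [if_pos hw2] at e2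
      exact absurd (e2.trans e1.symm) (Fin.ne_of_lt (Fin.castSucc_lt_last _))
    have hmem'' : ∀ v ∈ c, v ∈ D₁.verts ∨ v ∈ D₂.verts := by
      intro v hv
      rcases (hverts' v).mp (hmem' v hv).1 with rfl | h | h
      · exact absurd hv hu0c
      · exact Or.inl h
      · exact Or.inr h
    obtain ⟨v₀, hv₀⟩ := List.exists_mem_of_ne_nil c (by intro h'; subst h'; simp at hlen)
    rcases side_split hdisj hu₁ hu₂ hai hsubD hmem'' with ⟨hvs, has⟩ | ⟨hvs, has⟩
    · refine hψ₁ (ψ₁ v₀) ⟨c, hnd, hlen, fun v hv => ?_, fun p hp => has p hp⟩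
      rw [Finset.mem_filter]
      refine ⟨hvs v hv, ?_⟩
      have e1 := (hmem' v hv).2
      have e2 := (hmem' v₀ hv₀).2
      rw [if_neg (hd12 v (hvs v hv)), if_pos (hvs v hv)] at e1
      rw [if_neg (hd12 v₀ (hvs v₀ hv₀)), if_pos (hvs v₀ hv₀)] at e2
      exact e1.trans e2.symm
    · refine hα (α v₀) ⟨c, hnd, hlen, fun v hv => ?_, fun p hp => ?_⟩
      · rw [Finset.mem_filter]
        refine ⟨hvs v hv, ?_⟩
        apply Fin.castSucc_injective
        have e1 := (hmem' v hv).2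
        have e2 := (hmem' v₀ hv₀).2
        rw [if_pos (hvs v hv)] at e1
        rw [if_pos (hvs v₀ hv₀)] at e2
        exact e1.trans e2.symm
      · exact Finset.mem_erase.mpr
          ⟨(Finset.mem_erase.mp (hsubE p hp)).1, has p hp⟩
  · -- Case 3 : the arc is (u₀, y) with y ∈ V(D₁)
    have hprop : (D₁.delVert y).IsProperSubdigraph D₁ := by
      refine ⟨⟨Finset.erase_subset _ _, Finset.filter_subset _ _⟩, Or.inl fun he => ?_⟩
      have h2 : y ∈ (D₁.delVert y).verts := by rw [he]; exact hy
      exact (Finset.mem_erase.mp h2).1 rfl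
    obtain ⟨α, hα⟩ := dicolourable_of_dichromatic_le
      (show (D₁.delVert y).dichromatic ≤ m by
        have := h₁.2 _ hprop; simpa using this)
    refine ⟨fun v => if v ∈ D₁.verts then
        (if v = y then Fin.last m else (α v).castSucc) else
      if v ∈ D₂.verts then ψ₂ v else Fin.last m, fun i => ?_⟩
    rintro ⟨c, hnd, hlen, hmem, harcsub⟩
    obtain ⟨hsubE, hsubD⟩ := haE c harcsub
    have hmem' : ∀ v ∈ c, v ∈ D.verts ∧
        (if v ∈ D₁.verts then (if v = y then Fin.last m else (α v).castSucc) else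
          if v ∈ D₂.verts then ψ₂ v else Fin.last m) = i :=
      fun v hv => Finset.mem_filter.mp (hmem v hv)
    have hyc : y ∉ c := by
      intro hyc
      obtain ⟨w, hwc, hwarc⟩ := exists_pred_arc hyc
      have hwE := hsubE _ hwarc
      have hwD : (w, y) ∈ D.arcs := Finset.mem_of_mem_erase hwE
      have hne := (D.wf _ hwD).2.2
      have ey := (hmem' y hyc).2
      rw [if_pos hy, if_pos rfl] at ey
      rcases (hai (w, y)).mp hwD with h | h | ⟨h1, h2⟩ | ⟨h1, h2⟩ | ⟨h1, h2⟩
      · have hw1 := (D₁.wf _ h).1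
        have ew := (hmem' w hwc).2
        rw [if_pos hw1, if_neg hne] at ew
        exact absurd (ew.trans ey.symm) (Fin.ne_of_lt (Fin.castSucc_lt_last _))
      · exact hd12 y hy (D₂.wf _ h).2.1
      · refine (Finset.mem_erase.mp hwE).1 ?_
        have hwx : w = x := h1.trans he1.symm
        rw [hwx]
      · exact hd12 y hy h2
      · exact hu₁ (h2 ▸ hy)
    have hu0c : u₀ ∉ c := by
      intro hu0c
      obtain ⟨w, hwc, hw1, hwarc⟩ := out_of_u0 hu₁ hu₂ hai hsubD hu0c
      have hwy : w ≠ y := fun e => hyc (e ▸ hwc)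
      have e1 := (hmem' u₀ hu0c).2
      rw [if_neg hu₁, if_neg hu₂] at e1
      have e2 := (hmem' w hwc).2
      rw [if_pos hw1, if_neg hwy] at e2
      exact absurd (e2.trans e1.symm) (Fin.ne_of_lt (Fin.castSucc_lt_last _))
    have hmem'' : ∀ v ∈ c, v ∈ D₁.verts ∨ v ∈ D₂.verts := by
      intro v hv
      rcases (hverts' v).mp (hmem' v hv).1 with rfl | h | h
      · exact absurd hv hu0c
      · exact Or.inl h
      · exact Or.inr h
    obtain ⟨v₀, hv₀⟩ := List.exists_mem_of_ne_nil c (by intro h'; subst h'; simp at hlen)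
    rcases side_split hdisj hu₁ hu₂ hai hsubD hmem'' with ⟨hvs, has⟩ | ⟨hvs, has⟩
    · refine hα (α v₀) ⟨c, hnd, hlen, fun v hv => ?_, fun p hp => ?_⟩
      · rw [Finset.mem_filter]
        refine ⟨Finset.mem_erase.mpr ⟨fun e => hyc (e ▸ hv), hvs v hv⟩, ?_⟩
        apply Fin.castSucc_injective
        have e1 := (hmem' v hv).2
        have e2 := (hmem' v₀ hv₀).2
        rw [if_pos (hvs v hv), if_neg (show ¬ v = y from fun e => hyc (by rw [← e]; exact hv))] at e1
        rw [if_pos (hvs v₀ hv₀), if_neg (show ¬ v₀ = y from fun e => hyc (by rw [← e]; exact hv₀))] at e2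
        exact e1.trans e2.symm
      · refine Finset.mem_filter.mpr ⟨has p hp, ?_, ?_⟩
        · exact fun e => hyc (e ▸ (mem_of_mem_cyclicArcs_s18 hp).1)
        · exact fun e => hyc (e ▸ (mem_of_mem_cyclicArcs_s18 hp).2)
    · refine hψ₂ (ψ₂ v₀) ⟨c, hnd, hlen, fun v hv => ?_, fun p hp => has p hp⟩
      rw [Finset.mem_filter]
      refine ⟨hvs v hv, ?_⟩
      have e1 := (hmem' v hv).2
      have e2 := (hmem' v₀ hv₀).2
      rw [if_neg (hd21 v (hvs v hv)), if_pos (hvs v hv)] at e1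
      rw [if_neg (hd21 v₀ (hvs v₀ hv₀)), if_pos (hvs v₀ hv₀)] at e2
      exact e1.trans e2.symm
  · -- Case 5 : the arc is (x, y) with x ∈ V(D₁), y ∈ V(D₂)
    have hprop₁ : (D₁.delVert x).IsProperSubdigraph D₁ := by
      refine ⟨⟨Finset.erase_subset _ _, Finset.filter_subset _ _⟩, Or.inl fun he => ?_⟩
      have h2 : x ∈ (D₁.delVert x).verts := by rw [he]; exact hx
      exact (Finset.mem_erase.mp h2).1 rfl
    have hprop₂ : (D₂.delVert y).IsProperSubdigraph D₂ := by
      refine ⟨⟨Finset.erase_subset _ _, Finset.filter_subset _ _⟩, Or.inl fun he => ?_⟩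
      have h2 : y ∈ (D₂.delVert y).verts := by rw [he]; exact hy
      exact (Finset.mem_erase.mp h2).1 rfl
    obtain ⟨α, hα⟩ := dicolourable_of_dichromatic_le
      (show (D₁.delVert x).dichromatic ≤ m by
        have := h₁.2 _ hprop₁; simpa using this)
    obtain ⟨β, hβ⟩ := dicolourable_of_dichromatic_le
      (show (D₂.delVert y).dichromatic ≤ m by
        have := h₂.2 _ hprop₂; simpa using this)
    refine ⟨fun v => if v ∈ D₁.verts then
        (if v = x then Fin.last m else (α v).castSucc) else
      if v ∈ D₂.verts then (if v = y then Fin.last m else (β v).castSucc)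
      else Fin.last m, fun i => ?_⟩
    rintro ⟨c, hnd, hlen, hmem, harcsub⟩
    obtain ⟨hsubE, hsubD⟩ := haE c harcsub
    have hmem' : ∀ v ∈ c, v ∈ D.verts ∧
        (if v ∈ D₁.verts then (if v = x then Fin.last m else (α v).castSucc) else
          if v ∈ D₂.verts then (if v = y then Fin.last m else (β v).castSucc)
          else Fin.last m) = i :=
      fun v hv => Finset.mem_filter.mp (hmem v hv)
    have hxc : x ∉ c := by
      intro hxc
      obtain ⟨w, hwc, hwarc⟩ := exists_succ_arc hxc
      have hwE := hsubE _ hwarc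
      have hwD : (x, w) ∈ D.arcs := Finset.mem_of_mem_erase hwE
      have hne : x ≠ w := (D.wf _ hwD).2.2
      have ex := (hmem' x hxc).2
      rw [if_pos hx, if_pos rfl] at ex
      rcases (hai (x, w)).mp hwD with h | h | ⟨h1, h2⟩ | ⟨h1, h2⟩ | ⟨h1, h2⟩
      · have hw1 : w ∈ D₁.verts := (D₁.wf _ h).2.1
        have ew := (hmem' w hwc).2
        rw [if_pos hw1, if_neg (show ¬ w = x from fun e => hne e.symm)] at ew
        exact absurd (ew.trans ex.symm) (Fin.ne_of_lt (Fin.castSucc_lt_last _))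
      · exact hd12 x hx (D₂.wf _ h).1
      · exact hu₁ (show u₀ ∈ D₁.verts from by rw [← h1]; exact hx)
      · -- h2 : w ∈ D₂.verts
        by_cases hwy : w = y
        · exact (Finset.mem_erase.mp hwE).1 (by rw [hwy])
        · have ew := (hmem' w hwc).2
          rw [if_neg (hd21 w h2), if_pos h2, if_neg hwy] at ew
          exact absurd (ew.trans ex.symm) (Fin.ne_of_lt (Fin.castSucc_lt_last _))
      · exact hd12 x hx h1
    have hyc : y ∉ c := by
      intro hyc
      obtain ⟨w, hwc, hwarc⟩ := exists_pred_arc hyc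
      have hwE := hsubE _ hwarc
      have hwD : (w, y) ∈ D.arcs := Finset.mem_of_mem_erase hwE
      have hne : w ≠ y := (D.wf _ hwD).2.2
      have ey := (hmem' y hyc).2
      rw [if_neg (hd21 y hy), if_pos hy, if_pos rfl] at ey
      rcases (hai (w, y)).mp hwD with h | h | ⟨h1, h2⟩ | ⟨h1, h2⟩ | ⟨h1, h2⟩
      · exact hd21 y hy (D₁.wf _ h).2.1
      · have hw2 : w ∈ D₂.verts := (D₂.wf _ h).1
        have ew := (hmem' w hwc).2
        rw [if_neg (hd21 w hw2), if_pos hw2, if_neg hne] at ew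
        exact absurd (ew.trans ey.symm) (Fin.ne_of_lt (Fin.castSucc_lt_last _))
      · exact hd21 y hy h2
      · -- h1 : w ∈ D₁.verts
        by_cases hwx : w = x
        · exact (Finset.mem_erase.mp hwE).1 (by rw [hwx])
        · have ew := (hmem' w hwc).2
          rw [if_pos h1, if_neg hwx] at ew
          exact absurd (ew.trans ey.symm) (Fin.ne_of_lt (Fin.castSucc_lt_last _))
      · exact hu₂ (show u₀ ∈ D₂.verts by rw [← h2]; exact hy)
    have hu0c : u₀ ∉ c := by
      intro hu0c
      obtain ⟨w, hwc, hw1, hwarc⟩ := out_of_u0 hu₁ hu₂ hai hsubD hu0c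
      have hwx : ¬ w = x := fun e => hxc (by rw [← e]; exact hwc)
      have e1 := (hmem' u₀ hu0c).2
      rw [if_neg hu₁, if_neg hu₂] at e1
      have e2 := (hmem' w hwc).2
      rw [if_pos hw1, if_neg hwx] at e2
      exact absurd (e2.trans e1.symm) (Fin.ne_of_lt (Fin.castSucc_lt_last _))
    have hmem'' : ∀ v ∈ c, v ∈ D₁.verts ∨ v ∈ D₂.verts := by
      intro v hv
      rcases (hverts' v).mp (hmem' v hv).1 with rfl | h | h
      · exact absurd hv hu0c
      · exact Or.inl h
      · exact Or.inr h
    obtain ⟨v₀, hv₀⟩ := List.exists_mem_of_ne_nil c (by intro h'; subst h'; simp at hlen)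
    rcases side_split hdisj hu₁ hu₂ hai hsubD hmem'' with ⟨hvs, has⟩ | ⟨hvs, has⟩
    · refine hα (α v₀) ⟨c, hnd, hlen, fun v hv => ?_, fun p hp => ?_⟩
      · rw [Finset.mem_filter]
        refine ⟨Finset.mem_erase.mpr ⟨fun e => hxc (by rw [← e]; exact hv), hvs v hv⟩, ?_⟩
        apply Fin.castSucc_injective
        have e1 := (hmem' v hv).2
        have e2 := (hmem' v₀ hv₀).2
        rw [if_pos (hvs v hv), if_neg (show ¬ v = x from fun e => hxc (by rw [← e]; exact hv))] at e1
        rw [if_pos (hvs v₀ hv₀), if_neg (show ¬ v₀ = x from fun e => hxc (by rw [← e]; exact hv₀))] at e2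
        exact e1.trans e2.symm
      · refine Finset.mem_filter.mpr ⟨has p hp, ?_, ?_⟩
        · exact fun e => hxc (by rw [← e]; exact (mem_of_mem_cyclicArcs_s18 hp).1)
        · exact fun e => hxc (by rw [← e]; exact (mem_of_mem_cyclicArcs_s18 hp).2)
    · refine hβ (β v₀) ⟨c, hnd, hlen, fun v hv => ?_, fun p hp => ?_⟩
      · rw [Finset.mem_filter]
        refine ⟨Finset.mem_erase.mpr ⟨fun e => hyc (by rw [← e]; exact hv), hvs v hv⟩, ?_⟩
        apply Fin.castSucc_injective
        have e1 := (hmem' v hv).2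
        have e2 := (hmem' v₀ hv₀).2
        rw [if_neg (hd21 v (hvs v hv)), if_pos (hvs v hv),
          if_neg (show ¬ v = y from fun e => hyc (by rw [← e]; exact hv))] at e1
        rw [if_neg (hd21 v₀ (hvs v₀ hv₀)), if_pos (hvs v₀ hv₀),
          if_neg (show ¬ v₀ = y from fun e => hyc (by rw [← e]; exact hv₀))] at e2
        exact e1.trans e2.symm
      · refine Finset.mem_filter.mpr ⟨has p hp, ?_, ?_⟩
        · exact fun e => hyc (by rw [← e]; exact (mem_of_mem_cyclicArcs_s18 hp).1)
        · exact fun e => hyc (by rw [← e]; exact (mem_of_mem_cyclicArcs_s18 hp).2)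
  · -- Case 4 : the arc is (x, u₀) with x ∈ V(D₂)
    have hprop : (D₂.delVert x).IsProperSubdigraph D₂ := by
      refine ⟨⟨Finset.erase_subset _ _, Finset.filter_subset _ _⟩, Or.inl fun he => ?_⟩
      have h2 : x ∈ (D₂.delVert x).verts := by rw [he]; exact hx
      exact (Finset.mem_erase.mp h2).1 rfl
    obtain ⟨α, hα⟩ := dicolourable_of_dichromatic_le
      (show (D₂.delVert x).dichromatic ≤ m by
        have := h₂.2 _ hprop; simpa using this)
    refine ⟨fun v => if v ∈ D₂.verts then
        (if v = x then Fin.last m else (α v).castSucc) else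
      if v ∈ D₁.verts then ψ₁ v else Fin.last m, fun i => ?_⟩
    rintro ⟨c, hnd, hlen, hmem, harcsub⟩
    obtain ⟨hsubE, hsubD⟩ := haE c harcsub
    have hmem' : ∀ v ∈ c, v ∈ D.verts ∧
        (if v ∈ D₂.verts then (if v = x then Fin.last m else (α v).castSucc) else
          if v ∈ D₁.verts then ψ₁ v else Fin.last m) = i :=
      fun v hv => Finset.mem_filter.mp (hmem v hv)
    have hxc : x ∉ c := by
      intro hxc
      obtain ⟨w, hwc, hwarc⟩ := exists_succ_arc hxc
      have hwE := hsubE _ hwarc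
      have hwD : (x, w) ∈ D.arcs := Finset.mem_of_mem_erase hwE
      have hne : x ≠ w := (D.wf _ hwD).2.2
      have ex := (hmem' x hxc).2
      rw [if_pos hx, if_pos rfl] at ex
      rcases (hai (x, w)).mp hwD with h | h | ⟨h1, h2⟩ | ⟨h1, h2⟩ | ⟨h1, h2⟩
      · exact hd21 x hx (D₁.wf _ h).1
      · have hw2 : w ∈ D₂.verts := (D₂.wf _ h).2.1
        have ew := (hmem' w hwc).2
        rw [if_pos hw2, if_neg (show ¬ w = x from fun e => hne e.symm)] at ew
        exact absurd (ew.trans ex.symm) (Fin.ne_of_lt (Fin.castSucc_lt_last _))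
      · exact hu₂ (show u₀ ∈ D₂.verts from by rw [← h1]; exact hx)
      · exact hd21 x hx h1
      · refine (Finset.mem_erase.mp hwE).1 ?_
        have hwu : w = u₀ := h2
        have hyu : y = u₀ := he2
        rw [hwu, hyu]
    have hu0c : u₀ ∉ c := by
      intro hu0c
      obtain ⟨w, hwc, hw2, hwarc⟩ := in_to_u0 hu₁ hu₂ hai hsubD hu0c
      have hwx : ¬ w = x := fun e => hxc (by rw [← e]; exact hwc)
      have e1 := (hmem' u₀ hu0c).2
      rw [if_neg hu₂, if_neg hu₁] at e1
      have e2 := (hmem' w hwc).2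
      rw [if_pos hw2, if_neg hwx] at e2
      exact absurd (e2.trans e1.symm) (Fin.ne_of_lt (Fin.castSucc_lt_last _))
    have hmem'' : ∀ v ∈ c, v ∈ D₁.verts ∨ v ∈ D₂.verts := by
      intro v hv
      rcases (hverts' v).mp (hmem' v hv).1 with rfl | h | h
      · exact absurd hv hu0c
      · exact Or.inl h
      · exact Or.inr h
    obtain ⟨v₀, hv₀⟩ := List.exists_mem_of_ne_nil c (by intro h'; subst h'; simp at hlen)
    rcases side_split hdisj hu₁ hu₂ hai hsubD hmem'' with ⟨hvs, has⟩ | ⟨hvs, has⟩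
    · refine hψ₁ (ψ₁ v₀) ⟨c, hnd, hlen, fun v hv => ?_, fun p hp => has p hp⟩
      rw [Finset.mem_filter]
      refine ⟨hvs v hv, ?_⟩
      have e1 := (hmem' v hv).2
      have e2 := (hmem' v₀ hv₀).2
      rw [if_neg (hd12 v (hvs v hv)), if_pos (hvs v hv)] at e1
      rw [if_neg (hd12 v₀ (hvs v₀ hv₀)), if_pos (hvs v₀ hv₀)] at e2
      exact e1.trans e2.symm
    · refine hα (α v₀) ⟨c, hnd, hlen, fun v hv => ?_, fun p hp => ?_⟩
      · rw [Finset.mem_filter]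
        refine ⟨Finset.mem_erase.mpr ⟨fun e => hxc (by rw [← e]; exact hv), hvs v hv⟩, ?_⟩
        apply Fin.castSucc_injective
        have e1 := (hmem' v hv).2
        have e2 := (hmem' v₀ hv₀).2
        rw [if_pos (hvs v hv), if_neg (show ¬ v = x from fun e => hxc (by rw [← e]; exact hv))] at e1
        rw [if_pos (hvs v₀ hv₀), if_neg (show ¬ v₀ = x from fun e => hxc (by rw [← e]; exact hv₀))] at e2
        exact e1.trans e2.symm
      · refine Finset.mem_filter.mpr ⟨has p hp, ?_, ?_⟩
        · exact fun e => hxc (by rw [← e]; exact (mem_of_mem_cyclicArcs_s18 hp).1)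
        · exact fun e => hxc (by rw [← e]; exact (mem_of_mem_cyclicArcs_s18 hp).2)
end
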